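/- arXiv:1805.03864 — 4 statements merged into one kernel-verified Lean document; each statement's English description precedes it below -/
import Mathlib

section
/- Bruhat decomposition, existence part, for GL_n: for every g ∈ GL_n(F) there exist a permutation w ∈ S_n and invertible upper-triangular matrices b₁, b₂ ∈ B such that g = b₁ M_w b₂. -/
open Matrix

variable (F : Type*) [Field F] (n : ℕ)

/-- The Borel subgroup `B` of invertible upper-triangular matrices in `GL_n(F)`. -/
def Bsub : Subgroup (GL (Fin n) F) where
  carrier := {g | BlockTriangular (g : Matrix (Fin n) (Fin n) F) (id : Fin n → Fin n)}
  one_mem' := blockTriangular_one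
  mul_mem' := fun ha hb => ha.mul hb
  inv_mem' := by
    intro g hg
    have : Invertible (g : Matrix (Fin n) (Fin n) F) := g.invertible
    have h := blockTriangular_inv_of_blockTriangular (M := (g : Matrix (Fin n) (Fin n) F)) hg
    simpa [coe_units_inv] using h

/-- The permutation matrix of `w`, with a `1` in position `(w k, k)` for each `k`,
as an element of `GL_n(F)`. -/
def permGL (w : Equiv.Perm (Fin n)) : GL (Fin n) F :=
  { val := (w⁻¹).permMatrix F
    inv := w.permMatrix F
    val_inv := by
      rw [Equiv.Perm.permMatrix, Equiv.Perm.permMatrix, ← PEquiv.toMatrix_trans,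
        ← Equiv.toPEquiv_trans,
        show Equiv.trans w⁻¹ w = Equiv.refl (Fin n) from Equiv.symm_trans_self w,
        Equiv.toPEquiv_refl, PEquiv.toMatrix_refl]
    inv_val := by
      rw [Equiv.Perm.permMatrix, Equiv.Perm.permMatrix, ← PEquiv.toMatrix_trans,
        ← Equiv.toPEquiv_trans,
        show Equiv.trans w w⁻¹ = Equiv.refl (Fin n) from Equiv.self_trans_symm w,
        Equiv.toPEquiv_refl, PEquiv.toMatrix_refl] }

/-- The double coset `B w B ⊆ GL_n(F)`. -/
def doubleCoset (w : Equiv.Perm (Fin n)) : Set (GL (Fin n) F) :=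
  {g | ∃ b₁ ∈ Bsub F n, ∃ b₂ ∈ Bsub F n, g = b₁ * permGL F n w * b₂}

namespace Bruhat

variable {F : Type*} [Field F]


variable {F : Type*} [Field F]

/-- Permutation matrix with a `1` at `(w b, b)`. -/
def P {n : ℕ} (w : Equiv.Perm (Fin n)) : Matrix (Fin n) (Fin n) F :=
  Matrix.of fun a b => if a = w b then 1 else 0

lemma P_eq_permMatrix {n : ℕ} (w : Equiv.Perm (Fin n)) :
    (P w : Matrix (Fin n) (Fin n) F) = (w⁻¹ : Equiv.Perm (Fin n)).permMatrix F := by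
  ext a b
  simp only [P, Matrix.of_apply, Equiv.Perm.permMatrix, PEquiv.toMatrix_apply,
    Equiv.toPEquiv_apply, Option.mem_def, Option.some.injEq]
  refine if_congr ?_ rfl rfl
  constructor
  · rintro rfl; simp
  · rintro rfl; simp

/-- Extend a matrix on `Fin m` to a matrix on `Fin (m+1)` using equivs with `Option (Fin m)`,
placing a `1` at the position corresponding to `(none, none)`. -/
def ext2 {m : ℕ} (er ec : Fin (m + 1) ≃ Option (Fin m))
    (M : Matrix (Fin m) (Fin m) F) : Matrix (Fin (m + 1)) (Fin (m + 1)) F :=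
  Matrix.of fun a b =>
    Option.elim (er a) (Option.elim (ec b) 1 fun _ => 0)
      (fun x => Option.elim (ec b) 0 fun y => M x y)

lemma ext2_nn {m : ℕ} (er ec : Fin (m + 1) ≃ Option (Fin m)) (M : Matrix (Fin m) (Fin m) F)
    {a b} (h1 : er a = none) (h2 : ec b = none) : ext2 er ec M a b = 1 := by
  simp [ext2, h1, h2]

lemma ext2_ns {m : ℕ} (er ec : Fin (m + 1) ≃ Option (Fin m)) (M : Matrix (Fin m) (Fin m) F)
    {a b y} (h1 : er a = none) (h2 : ec b = some y) : ext2 er ec M a b = 0 := by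
  simp [ext2, h1, h2]

lemma ext2_sn {m : ℕ} (er ec : Fin (m + 1) ≃ Option (Fin m)) (M : Matrix (Fin m) (Fin m) F)
    {a b x} (h1 : er a = some x) (h2 : ec b = none) : ext2 er ec M a b = 0 := by
  simp [ext2, h1, h2]

lemma ext2_ss {m : ℕ} (er ec : Fin (m + 1) ≃ Option (Fin m)) (M : Matrix (Fin m) (Fin m) F)
    {a b x y} (h1 : er a = some x) (h2 : ec b = some y) : ext2 er ec M a b = M x y := by
  simp [ext2, h1, h2]

lemma ext2_mul {m : ℕ} (er em ec : Fin (m + 1) ≃ Option (Fin m))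
    (M N : Matrix (Fin m) (Fin m) F) :
    ext2 er em M * ext2 em ec N = ext2 er ec (M * N) := by
  ext a b
  rw [Matrix.mul_apply,
    ← Equiv.sum_comp em.symm fun c => ext2 er em M a c * ext2 em ec N c b,
    Fintype.sum_option]
  rcases h1 : er a with _ | x <;> rcases h2 : ec b with _ | y <;>
    simp [ext2, h1, h2, Matrix.mul_apply]

lemma ext2_one {m : ℕ} (e : Fin (m + 1) ≃ Option (Fin m)) :
    ext2 e e (1 : Matrix (Fin m) (Fin m) F) = 1 := by
  ext a b
  by_cases hab : a = b
  · subst hab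
    rcases h : e a with _ | x <;> simp [ext2, h, Matrix.one_apply]
  · rcases h1 : e a with _ | x <;> rcases h2 : e b with _ | y
    · exact absurd (e.injective (h1.trans h2.symm)) hab
    · simp [ext2, h1, h2, Matrix.one_apply, hab]
    · simp [ext2, h1, h2, Matrix.one_apply, hab]
    · have hxy : x ≠ y := by
        rintro rfl
        exact hab (e.injective (h1.trans h2.symm))
      simp [ext2, h1, h2, Matrix.one_apply, hab, hxy]

lemma ext2_tri {m : ℕ} {e : Fin (m + 1) ≃ Option (Fin m)}
    (hmono : StrictMono fun k => e.symm (some k)) {M : Matrix (Fin m) (Fin m) F}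
    (hM : M.BlockTriangular id) : (ext2 e e M).BlockTriangular id := by
  intro a b hab
  rcases h1 : e a with _ | x <;> rcases h2 : e b with _ | y
  · exact absurd (e.injective (h1.trans h2.symm)) (ne_of_gt hab)
  · exact ext2_ns e e M h1 h2
  · exact ext2_sn e e M h1 h2
  · rw [ext2_ss e e M h1 h2]
    refine hM ?_
    have ha : a = e.symm (some x) := by rw [← h1, Equiv.symm_apply_apply]
    have hb : b = e.symm (some y) := by rw [← h2, Equiv.symm_apply_apply]
    have : e.symm (some y) < e.symm (some x) := by rw [← ha, ← hb]; exact hab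
    exact hmono.lt_iff_lt.mp this

lemma ext2_isUnit {m : ℕ} (e : Fin (m + 1) ≃ Option (Fin m))
    {M : Matrix (Fin m) (Fin m) F} (hM : IsUnit M.det) : IsUnit (ext2 e e M).det := by
  apply Matrix.isUnit_det_of_right_inverse (B := ext2 e e M⁻¹)
  rw [ext2_mul, Matrix.mul_nonsing_inv _ hM, ext2_one]


lemma key : ∀ (n : ℕ) (g : Matrix (Fin n) (Fin n) F), IsUnit g.det →
    ∃ (w : Equiv.Perm (Fin n)) (U V : Matrix (Fin n) (Fin n) F),
      U.BlockTriangular id ∧ V.BlockTriangular id ∧ IsUnit U.det ∧ IsUnit V.det ∧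
      g = U * P w * V := by
  intro n
  induction n with
  | zero =>
      intro g _
      refine ⟨1, 1, 1, blockTriangular_one, blockTriangular_one, by simp, by simp, ?_⟩
      apply Matrix.ext; intro a; exact a.elim0
  | succ m ih =>
      intro g hg
      classical
      -- find the pivot: lowest nonzero entry of column 0
      obtain ⟨i, hi, hmax⟩ : ∃ i, g i 0 ≠ 0 ∧ ∀ j, i < j → g j 0 = 0 := by
        have hex : ∃ i, g i 0 ≠ 0 := by
          by_contra h
          push_neg at h
          rw [Matrix.det_eq_zero_of_column_eq_zero 0 h] at hg
          exact not_isUnit_zero hg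
        set s : Finset (Fin (m + 1)) := Finset.univ.filter (fun i => g i 0 ≠ 0) with hs_def
        have hs : s.Nonempty := by
          obtain ⟨i, hi⟩ := hex
          exact ⟨i, by simp [hs_def, hi]⟩
        refine ⟨s.max' hs, by simpa [hs_def] using s.max'_mem hs, fun j hj => ?_⟩
        by_contra hgj
        exact absurd (s.le_max' j (by simp [hs_def, hgj])) (not_le.mpr hj)
      -- clear column 0 with row operations (left mult by upper triangular U₁)
      set U₁ : Matrix (Fin (m + 1)) (Fin (m + 1)) F :=
        Matrix.of (fun a b => if a = b then (if a = i then (g i 0)⁻¹ else 1)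
          else if b = i then -(g a 0) * (g i 0)⁻¹ else 0) with hU₁def
      have hU₁tri : U₁.BlockTriangular id := by
        intro a b hab
        have hne : a ≠ b := ne_of_gt hab
        by_cases hbi : b = i
        · subst hbi
          have h0 : g a 0 = 0 := hmax a hab
          simp [hU₁def, hne, h0]
        · simp [hU₁def, hne, hbi]
      have hU₁det : IsUnit U₁.det := by
        rw [Matrix.det_of_upperTriangular hU₁tri, isUnit_iff_ne_zero]
        refine Finset.prod_ne_zero_iff.mpr fun a _ => ?_
        by_cases h : a = i <;> simp [hU₁def, h, inv_ne_zero hi]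
      set A := U₁ * g with hAdef
      have hA0 : ∀ a, A a 0 = if a = i then 1 else 0 := by
        intro a
        rw [hAdef, Matrix.mul_apply]
        by_cases ha : a = i
        · rw [if_pos ha, ha]
          calc ∑ b, U₁ i b * g b 0 = ∑ b, (if b = i then (1 : F) else 0) := by
                refine Finset.sum_congr rfl fun b _ => ?_
                rcases eq_or_ne b i with rfl | hb
                · simp [hU₁def, inv_mul_cancel₀ hi]
                · simp [hU₁def, hb, Ne.symm hb]
            _ = 1 := by simp
        · rw [if_neg ha]
          calc ∑ b, U₁ a b * g b 0
              = ∑ b, ((if b = a then g a 0 else 0) + (if b = i then -(g a 0) else 0)) := by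
                refine Finset.sum_congr rfl fun b _ => ?_
                rcases eq_or_ne b a with rfl | hb
                · simp [hU₁def, ha]
                · rcases eq_or_ne b i with rfl | hbi
                  · have hab : a ≠ b := ha
                    simp [hU₁def, hab, hb, mul_assoc, inv_mul_cancel₀ hi]
                  · simp [hU₁def, Ne.symm hb, hb, hbi]
            _ = g a 0 + -(g a 0) := by rw [Finset.sum_add_distrib]; simp
            _ = 0 := by ring
      -- clear row i with column operations (right mult by upper triangular V₁)
      set V₁ : Matrix (Fin (m + 1)) (Fin (m + 1)) F :=
        Matrix.of (fun a b => if a = b then 1 else if a = 0 then -(A i b) else 0) with hV₁def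
      have hV₁tri : V₁.BlockTriangular id := by
        intro a b hab
        have h1 : a ≠ b := ne_of_gt hab
        have h2 : a ≠ 0 := by
          intro h
          rw [h] at hab
          exact (Fin.not_lt_zero b) hab
        simp [hV₁def, h1, h2]
      have hV₁det : IsUnit V₁.det := by
        rw [Matrix.det_of_upperTriangular hV₁tri]
        simp [hV₁def]
      set A' := A * V₁ with hA'def
      have hA'app : ∀ a b, A' a b = A a b + (if b = 0 then 0 else -(A a 0 * A i b)) := by
        intro a b
        rw [hA'def, Matrix.mul_apply]
        calc ∑ c, A a c * V₁ c b
            = ∑ c, ((if c = b then A a b else 0) +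
                (if b = 0 then 0 else if c = 0 then -(A a 0 * A i b) else 0)) := by
              refine Finset.sum_congr rfl fun c _ => ?_
              by_cases hb : b = 0
              · rw [if_pos hb]
                rcases eq_or_ne c b with rfl | hcb
                · simp [hV₁def]
                · have hc0 : c ≠ 0 := hb ▸ hcb
                  simp [hV₁def, hcb, hc0]
              · rw [if_neg hb]
                rcases eq_or_ne c b with rfl | hcb
                · have : c ≠ 0 := hb
                  simp [hV₁def, this]
                · rcases eq_or_ne c 0 with rfl | hc0
                  · simp [hV₁def, hcb, mul_neg, mul_comm]
                  · simp [hV₁def, hcb, hc0]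
            _ = A a b + (if b = 0 then 0 else -(A a 0 * A i b)) := by
              rw [Finset.sum_add_distrib]
              congr 1
              · simp
              · by_cases hb : b = 0 <;> simp [hb]
      have hA'col : ∀ a, A' a 0 = if a = i then 1 else 0 := fun a => by
        rw [hA'app]
        simp [hA0 a]
      have hA'row : ∀ b, b ≠ 0 → A' i b = 0 := fun b hb => by
        rw [hA'app, if_neg hb, hA0 i, if_pos rfl]
        ring
      have hA'det : IsUnit A'.det := by
        rw [hA'def, hAdef, Matrix.det_mul, Matrix.det_mul]
        exact (hU₁det.mul hg).mul hV₁det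
      set g'' := A'.submatrix i.succAbove Fin.succ with hg''def
      have hg''det : IsUnit g''.det := by
        have hd : A'.det = (-1 : F) ^ (i : ℕ) * g''.det := by
          rw [Matrix.det_succ_column_zero, Finset.sum_eq_single i]
          · rw [hA'col, if_pos rfl, hg''def]
            ring
          · intro j _ hj
            rw [hA'col, if_neg hj]
            ring
          · intro h
            exact absurd (Finset.mem_univ i) h
        rw [hd] at hA'det
        rw [isUnit_iff_ne_zero] at hA'det ⊢
        exact fun h => hA'det (by rw [h, mul_zero])
      obtain ⟨w', U', V', hU't, hV't, hU'd, hV'd, hgw'⟩ := ih g'' hg''det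
      set e₁ := finSuccEquiv' i with he₁
      set e₀ := finSuccEquiv m with he₀
      set w : Equiv.Perm (Fin (m + 1)) := e₀.trans ((Equiv.optionCongr w').trans e₁.symm)
        with hwdef
      have hwb : ∀ b, w b = e₁.symm (Equiv.optionCongr w' (e₀ b)) := fun b => rfl
      -- the permutation matrix of w is the extension of that of w'
      have hP : (P w : Matrix (Fin (m + 1)) (Fin (m + 1)) F) = ext2 e₁ e₀ (P w') := by
        ext a b
        rcases h1 : e₁ a with _ | x <;> rcases h2 : e₀ b with _ | y
        · rw [ext2_nn _ _ _ h1 h2]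
          have : a = w b := by
            rw [hwb, h2]
            simpa using ((Equiv.eq_symm_apply _).mpr h1)
          simp [P, this]
        · rw [ext2_ns _ _ _ h1 h2]
          have : a ≠ w b := by
            intro h
            rw [hwb, h2] at h
            have := (Equiv.eq_symm_apply _).mp h
            rw [h1] at this
            simp at this
          simp [P, this]
        · rw [ext2_sn _ _ _ h1 h2]
          have : a ≠ w b := by
            intro h
            rw [hwb, h2] at h
            have := (Equiv.eq_symm_apply _).mp h
            rw [h1] at this
            simp at this
          simp [P, this]
        · rw [ext2_ss _ _ _ h1 h2]
          have hiff : (a = w b) ↔ (x = w' y) := by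
            rw [hwb, h2]
            rw [show (Equiv.optionCongr w') (some y) = some (w' y) by simp]
            rw [Equiv.eq_symm_apply _, h1]
            simp [eq_comm]
          simp only [P, Matrix.of_apply]
          rw [if_congr hiff rfl rfl]
      -- A' is the extension of g''
      have hA'eq : A' = ext2 e₁ e₀ g'' := by
        ext a b
        rcases h1 : e₁ a with _ | x <;> rcases h2 : e₀ b with _ | y
        · rw [ext2_nn _ _ _ h1 h2]
          have ha : a = i := by
            have := (Equiv.eq_symm_apply _).mpr h1
            rwa [he₁, finSuccEquiv'_symm_none] at this
          have hb : b = 0 := by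
            have := (Equiv.eq_symm_apply _).mpr h2
            rwa [he₀, finSuccEquiv_symm_none] at this
          rw [ha, hb, hA'col, if_pos rfl]
        · rw [ext2_ns _ _ _ h1 h2]
          have ha : a = i := by
            have := (Equiv.eq_symm_apply _).mpr h1
            rwa [he₁, finSuccEquiv'_symm_none] at this
          have hb : b = y.succ := by
            have := (Equiv.eq_symm_apply _).mpr h2
            rwa [he₀, finSuccEquiv_symm_some] at this
          rw [ha, hb]
          exact hA'row y.succ (Fin.succ_ne_zero y)
        · rw [ext2_sn _ _ _ h1 h2]
          have ha : a = i.succAbove x := by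
            have := (Equiv.eq_symm_apply _).mpr h1
            rwa [he₁, finSuccEquiv'_symm_some] at this
          have hb : b = 0 := by
            have := (Equiv.eq_symm_apply _).mpr h2
            rwa [he₀, finSuccEquiv_symm_none] at this
          rw [ha, hb, hA'col, if_neg (Fin.succAbove_ne i x)]
        · rw [ext2_ss _ _ _ h1 h2]
          have ha : a = i.succAbove x := by
            have := (Equiv.eq_symm_apply _).mpr h1
            rwa [he₁, finSuccEquiv'_symm_some] at this
          have hb : b = y.succ := by
            have := (Equiv.eq_symm_apply _).mpr h2
            rwa [he₀, finSuccEquiv_symm_some] at this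
          rw [ha, hb, hg''def]
          rfl
      set U := ext2 e₁ e₁ U' with hUdef
      set V := ext2 e₀ e₀ V' with hVdef
      have hm₁ : StrictMono fun k => e₁.symm (some k) := by
        simp only [he₁, finSuccEquiv'_symm_some]
        exact Fin.strictMono_succAbove i
      have hm₀ : StrictMono fun k => e₀.symm (some k) := by
        simp only [he₀, finSuccEquiv_symm_some]
        exact fun x y h => Fin.succ_lt_succ_iff.mpr h
      have hUt : U.BlockTriangular id := ext2_tri hm₁ hU't
      have hVt : V.BlockTriangular id := ext2_tri hm₀ hV't
      have hUd : IsUnit U.det := ext2_isUnit e₁ hU'd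
      have hVd : IsUnit V.det := ext2_isUnit e₀ hV'd
      have hA'eq2 : A' = U * P w * V := by
        rw [hUdef, hVdef, hP, ext2_mul, ext2_mul, hA'eq, hgw']
      have hgA' : g = U₁⁻¹ * A' * V₁⁻¹ := by
        rw [hA'def, hAdef]
        calc g = (U₁⁻¹ * U₁) * g * (V₁ * V₁⁻¹) := by
              rw [Matrix.nonsing_inv_mul _ hU₁det, Matrix.mul_nonsing_inv _ hV₁det,
                one_mul, mul_one]
          _ = U₁⁻¹ * (U₁ * g * V₁) * V₁⁻¹ := by
              simp only [Matrix.mul_assoc]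
      haveI : Invertible U₁ := U₁.invertibleOfIsUnitDet hU₁det
      haveI : Invertible V₁ := V₁.invertibleOfIsUnitDet hV₁det
      refine ⟨w, U₁⁻¹ * U, V * V₁⁻¹, ?_, ?_, ?_, ?_, ?_⟩
      · exact (Matrix.blockTriangular_inv_of_blockTriangular hU₁tri).mul hUt
      · exact hVt.mul (Matrix.blockTriangular_inv_of_blockTriangular hV₁tri)
      · rw [Matrix.det_mul, Matrix.det_nonsing_inv, isUnit_iff_ne_zero]
        refine mul_ne_zero ?_ hUd.ne_zero
        rw [Ring.inverse_eq_inv']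
        exact inv_ne_zero hU₁det.ne_zero
      · rw [Matrix.det_mul, Matrix.det_nonsing_inv, isUnit_iff_ne_zero]
        refine mul_ne_zero hVd.ne_zero ?_
        rw [Ring.inverse_eq_inv']
        exact inv_ne_zero hV₁det.ne_zero
      · rw [hgA', hA'eq2]
        simp only [Matrix.mul_assoc]

end Bruhat

/-- **Bruhat decomposition for GL_n, existence part.**
Every `g ∈ GL_n(F)` can be written as `g = b₁ M_w b₂` with `w ∈ S_n` a permutation and
`b₁, b₂` invertible upper-triangular matrices. -/
theorem bruhat_decomposition_exists (F : Type*) [Field F] (n : ℕ) (hn : 2 ≤ n)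
    (g : GL (Fin n) F) :
    ∃ (w : Equiv.Perm (Fin n)) (b₁ b₂ : GL (Fin n) F),
      b₁ ∈ Bsub F n ∧ b₂ ∈ Bsub F n ∧ g = b₁ * permGL F n w * b₂ := by
  obtain ⟨w, U, V, hUt, hVt, hUd, hVd, hgeq⟩ :=
    Bruhat.key n ((g : Matrix (Fin n) (Fin n) F))
      ((Matrix.isUnit_iff_isUnit_det _).mp g.isUnit)
  have hU : IsUnit U := (Matrix.isUnit_iff_isUnit_det _).mpr hUd
  have hV : IsUnit V := (Matrix.isUnit_iff_isUnit_det _).mpr hVd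
  refine ⟨w, hU.unit, hV.unit, ?_, ?_, ?_⟩
  · show BlockTriangular ((hU.unit : Matrix (Fin n) (Fin n) F)) id
    rw [IsUnit.unit_spec]
    exact hUt
  · show BlockTriangular ((hV.unit : Matrix (Fin n) (Fin n) F)) id
    rw [IsUnit.unit_spec]
    exact hVt
  · apply Units.ext
    show (g : Matrix (Fin n) (Fin n) F) = _
    rw [Units.val_mul, Units.val_mul, IsUnit.unit_spec, IsUnit.unit_spec]
    rw [show ((permGL F n w : GL (Fin n) F) : Matrix (Fin n) (Fin n) F)
      = Bruhat.P w from (Bruhat.P_eq_permMatrix w).symm]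
    exact hgeq
end

section
/- Bruhat decomposition, uniqueness part, for GL_n: if w, w' ∈ S_n and b₁, b₂, b₁', b₂' ∈ B satisfy b₁ M_w b₂ = b₁' M_{w'} b₂', then w = w'. Equivalently, the double cosets BwB for w ∈ S_n are pairwise disjoint. -/
open Matrix

variable (F : Type*) [Field F] (n : ℕ)

lemma Bsub_diag_ne_zero {F : Type*} [Field F] {n : ℕ} {g : GL (Fin n) F}
    (hg : BlockTriangular (g : Matrix (Fin n) (Fin n) F) (id : Fin n → Fin n)) (i : Fin n) :
    (g : Matrix (Fin n) (Fin n) F) i i ≠ 0 := by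
  have hdet : IsUnit (g : Matrix (Fin n) (Fin n) F).det :=
    (Matrix.isUnit_iff_isUnit_det _).mp ⟨g, rfl⟩
  rw [Matrix.det_of_upperTriangular hg] at hdet
  have := hdet.ne_zero
  rw [Finset.prod_ne_zero_iff] at this
  exact this i (Finset.mem_univ i)

lemma key_le {F : Type*} [Field F] {n : ℕ} (w w' : Equiv.Perm (Fin n))
    (u v : GL (Fin n) F)
    (hu : BlockTriangular (u : Matrix (Fin n) (Fin n) F) (id : Fin n → Fin n))
    (hv : BlockTriangular (v : Matrix (Fin n) (Fin n) F) (id : Fin n → Fin n))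
    (h : ((w⁻¹).permMatrix F : Matrix (Fin n) (Fin n) F) =
      (u : Matrix (Fin n) (Fin n) F) * ((w'⁻¹).permMatrix F) * (v : Matrix (Fin n) (Fin n) F))
    (c : Fin n) : w' c ≤ w c := by
  classical
  set V : Matrix (Fin n) (Fin n) F := (v : Matrix (Fin n) (Fin n) F) with hV
  set U : Matrix (Fin n) (Fin n) F := (u : Matrix (Fin n) (Fin n) F) with hU
  have hvcc : V c c ≠ 0 := Bsub_diag_ne_zero hv c
  -- the set of relevant t's
  set S : Finset (Fin n) := Finset.univ.filter (fun t => V t c ≠ 0) with hS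
  have hcS : c ∈ S := by simp [hS, hvcc]
  have hSne : (S.image w').Nonempty := ⟨w' c, Finset.mem_image_of_mem _ hcS⟩
  set m : Fin n := (S.image w').max' hSne with hm
  obtain ⟨t₀, ht₀S, ht₀⟩ := Finset.mem_image.mp ((S.image w').max'_mem hSne)
  rw [← hm] at ht₀
  have hmax : ∀ t ∈ S, w' t ≤ m := fun t ht =>
    Finset.le_max' _ _ (Finset.mem_image_of_mem _ ht)
  -- compute the (m, c) entry of the RHS
  have hMV : ((w'⁻¹).permMatrix F : Matrix (Fin n) (Fin n) F) * V = V.submatrix ⇑w'⁻¹ id :=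
    PEquiv.toMatrix_toPEquiv_mul _ _
  have hRHS : (U * (((w'⁻¹).permMatrix F) * V)) m c = U m m * V t₀ c := by
    rw [hMV, Matrix.mul_apply]
    rw [Finset.sum_eq_single (w' t₀)]
    · simp only [Matrix.submatrix_apply, id_eq]
      rw [Equiv.Perm.inv_def, Equiv.symm_apply_apply, ht₀]
    · intro s _ hs
      rcases eq_or_ne (V (w'⁻¹ s) c) 0 with h0 | h0
      · rw [Equiv.Perm.inv_def] at h0; simp [h0]
      · have hsS : (w'⁻¹ : Equiv.Perm (Fin n)) s ∈ S := by rw [Equiv.Perm.inv_def] at h0; simp [hS, h0]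
        have hle : s ≤ m := by
          have := hmax _ hsS
          simpa using this
        have hlt : s < m := lt_of_le_of_ne hle (fun hsm => hs (by rw [hsm, ← ht₀]))
        have : U m s = 0 := hu (by simpa using hlt)
        simp [this]
    · intro habs
      exact absurd (Finset.mem_univ _) habs
  have hne : (U * (((w'⁻¹).permMatrix F) * V)) m c ≠ 0 := by
    rw [hRHS]
    have ht₀ne : V t₀ c ≠ 0 := by
      simp only [hS, Finset.mem_filter] at ht₀S
      exact ht₀S.2
    exact mul_ne_zero (Bsub_diag_ne_zero hu m) ht₀ne
  -- compare with LHS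
  have hL : ((w⁻¹).permMatrix F : Matrix (Fin n) (Fin n) F) m c ≠ 0 := by
    rw [h, Matrix.mul_assoc]; exact hne
  have hwc : w c = m := by
    by_contra hne'
    apply hL
    have hcm : c ≠ w⁻¹ m := fun hc => hne' (by rw [hc]; simp)
    rw [Equiv.Perm.inv_def] at hcm
    simp [Equiv.Perm.permMatrix, PEquiv.toMatrix_apply, Equiv.toPEquiv_apply, hcm, Ne.symm hcm]
  have hcc : w' c ≤ m := hmax c hcS
  rw [hwc]; exact hcc

/-- **Bruhat decomposition for `GL_n`, uniqueness part.**
If `b₁ M_w b₂ = b₁' M_{w'} b₂'` with `b₁, b₂, b₁', b₂'` invertible upper-triangular, then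
`w = w'`; equivalently, the double cosets `BwB` are pairwise disjoint. -/
theorem bruhat_decomposition_unique (F : Type*) [Field F] (n : ℕ) (hn : 2 ≤ n)
    (w w' : Equiv.Perm (Fin n)) (b₁ b₂ b₁' b₂' : GL (Fin n) F)
    (hb₁ : b₁ ∈ Bsub F n) (hb₂ : b₂ ∈ Bsub F n) (hb₁' : b₁' ∈ Bsub F n) (hb₂' : b₂' ∈ Bsub F n)
    (h : b₁ * permGL F n w * b₂ = b₁' * permGL F n w' * b₂') :
    w = w' := by
  have hu : b₁⁻¹ * b₁' ∈ Bsub F n := mul_mem (inv_mem hb₁) hb₁'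
  have hv : b₂' * b₂⁻¹ ∈ Bsub F n := mul_mem hb₂' (inv_mem hb₂)
  have hu' : b₁'⁻¹ * b₁ ∈ Bsub F n := mul_mem (inv_mem hb₁') hb₁
  have hv' : b₂ * b₂'⁻¹ ∈ Bsub F n := mul_mem hb₂ (inv_mem hb₂')
  have heq : permGL F n w = (b₁⁻¹ * b₁') * permGL F n w' * (b₂' * b₂⁻¹) := by
    calc permGL F n w = b₁⁻¹ * (b₁ * permGL F n w * b₂) * b₂⁻¹ := by group
    _ = b₁⁻¹ * (b₁' * permGL F n w' * b₂') * b₂⁻¹ := by rw [h]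
    _ = b₁⁻¹ * b₁' * permGL F n w' * (b₂' * b₂⁻¹) := by group
  have heq' : permGL F n w' = (b₁'⁻¹ * b₁) * permGL F n w * (b₂ * b₂'⁻¹) := by
    calc permGL F n w' = b₁'⁻¹ * (b₁' * permGL F n w' * b₂') * b₂'⁻¹ := by group
    _ = b₁'⁻¹ * (b₁ * permGL F n w * b₂) * b₂'⁻¹ := by rw [h]
    _ = b₁'⁻¹ * b₁ * permGL F n w * (b₂ * b₂'⁻¹) := by group
  have hM : ((w⁻¹).permMatrix F : Matrix (Fin n) (Fin n) F) =
      ((b₁⁻¹ * b₁' : GL (Fin n) F) : Matrix (Fin n) (Fin n) F) * ((w'⁻¹).permMatrix F) *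
      ((b₂' * b₂⁻¹ : GL (Fin n) F) : Matrix (Fin n) (Fin n) F) := by
    have := congrArg (fun g : GL (Fin n) F => (g : Matrix (Fin n) (Fin n) F)) heq
    simpa [permGL, Units.val_mul] using this
  have hM' : ((w'⁻¹).permMatrix F : Matrix (Fin n) (Fin n) F) =
      ((b₁'⁻¹ * b₁ : GL (Fin n) F) : Matrix (Fin n) (Fin n) F) * ((w⁻¹).permMatrix F) *
      ((b₂ * b₂'⁻¹ : GL (Fin n) F) : Matrix (Fin n) (Fin n) F) := by
    have := congrArg (fun g : GL (Fin n) F => (g : Matrix (Fin n) (Fin n) F)) heq'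
    simpa [permGL, Units.val_mul] using this
  ext c
  have h1 : w' c ≤ w c := key_le w w' _ _ hu hv hM c
  have h2 : w c ≤ w' c := key_le w' w _ _ hu' hv' hM' c
  exact congrArg Fin.val (le_antisymm h2 h1)
end

section
/- Over the finite field F = 𝔽_q, for every w ∈ S_n the number of cosets gB with g ∈ BwB (i.e., the cardinality of the Schubert cell BwB/B) equals q^{ℓ(w)}. -/
open Matrix

variable (F : Type*) [Field F] (n : ℕ)

/-- The elementary unipotent matrix `I + c E_{a b}` (for `a ≠ b`) as an element of `GL_n(F)`. -/
def elemGL (a b : Fin n) (hab : a ≠ b) (c : F) : GL (Fin n) F :=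
  { val := transvection a b c
    inv := transvection a b (-c)
    val_inv := by
      rw [transvection_mul_transvection_same _ _ hab, add_neg_cancel, transvection_zero]
    inv_val := by
      rw [transvection_mul_transvection_same _ _ hab, neg_add_cancel, transvection_zero] }

/-- `x_k(c) = I + c E_{k,k+1}` (rows/columns of `Fin n` being numbered `1, …, n`),
for `1 ≤ k ≤ n-1`; junk value `1` for out-of-range `k`. -/
def xGL (k : ℕ) (c : F) : GL (Fin n) F :=
  if h : 0 < k ∧ k < n then
    elemGL F n ⟨k - 1, by omega⟩ ⟨k, h.2⟩ (by simp [Fin.ext_iff]; omega) c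
  else 1

/-- `y_k(c) = I + c E_{k+1,k}`, for `1 ≤ k ≤ n-1`; junk value `1` for out-of-range `k`. -/
def yGL (k : ℕ) (c : F) : GL (Fin n) F :=
  if h : 0 < k ∧ k < n then
    elemGL F n ⟨k, h.2⟩ ⟨k - 1, by omega⟩ (by simp [Fin.ext_iff]; omega) c
  else 1

/-- `n_k = (I + E_{k,k+1})(I − E_{k+1,k})(I + E_{k,k+1})`. -/
def nGL (k : ℕ) : GL (Fin n) F := xGL F n k 1 * yGL F n k (-1) * xGL F n k 1

/-- The adjacent transposition `s_k = (k, k+1)` (with `1, …, n` numbering),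
for `1 ≤ k ≤ n-1`; junk value `1` for out-of-range `k`. -/
def sT (k : ℕ) : Equiv.Perm (Fin n) :=
  if h : 0 < k ∧ k < n then Equiv.swap ⟨k - 1, by omega⟩ ⟨k, h.2⟩ else 1

/-- The length `ℓ(w)` of a permutation: its number of inversions. -/
def invCount (w : Equiv.Perm (Fin n)) : ℕ :=
  (Finset.univ.filter fun p : Fin n × Fin n => p.1 < p.2 ∧ w p.2 < w p.1).card

/-- `l` is a reduced word for `w`: a minimal-length expression of `w` as a product of
adjacent transpositions. -/
def IsReducedWord (l : List ℕ) (w : Equiv.Perm (Fin n)) : Prop :=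
  (∀ k ∈ l, 0 < k ∧ k < n) ∧ (l.map (sT n)).prod = w ∧
    ∀ l' : List ℕ, (∀ k ∈ l', 0 < k ∧ k < n) → (l'.map (sT n)).prod = w →
      l.length ≤ l'.length

/-- The product `x_{i₁}(c₁) n_{i₁}⁻¹ ⋯ x_{i_ℓ}(c_ℓ) n_{i_ℓ}⁻¹` attached to a word
`l = [i₁, …, i_ℓ]` and parameters `c : Fin l.length → F`. -/
def prodWord (l : List ℕ) (c : Fin l.length → F) : GL (Fin n) F :=
  (List.ofFn fun m : Fin l.length => xGL F n (l.get m) (c m) * (nGL F n (l.get m))⁻¹).prod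

/-- The standard maximal parabolic subgroup `P_j ≤ GL_n(F)` (for `1 ≤ j ≤ n-1`):
the stabilizer of `span(e_1, …, e_j)`, i.e. the invertible block upper-triangular matrices
with diagonal blocks of sizes `j` and `n - j`. -/
def Pmax (j : ℕ) : Subgroup (GL (Fin n) F) where
  carrier := {g | BlockTriangular (g : Matrix (Fin n) (Fin n) F)
    (fun a : Fin n => if (a : ℕ) < j then (0 : ℕ) else 1)}
  one_mem' := blockTriangular_one
  mul_mem' := fun ha hb => ha.mul hb
  inv_mem' := by
    intro g hg
    have : Invertible (g : Matrix (Fin n) (Fin n) F) := g.invertible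
    have h := blockTriangular_inv_of_blockTriangular (M := (g : Matrix (Fin n) (Fin n) F)) hg
    simpa [coe_units_inv] using h

/-- `W_j = {w ∈ S_n : w({1,…,j}) = {1,…,j}}`. -/
def Wfix (j : ℕ) : Set (Equiv.Perm (Fin n)) :=
  {w | (fun a => w a) '' {a : Fin n | (a : ℕ) < j} = {a : Fin n | (a : ℕ) < j}}

/-- `W^j`: the set of permutations of minimal length (fewest inversions) in their left coset
`u W_j`. -/
def minReps (j : ℕ) : Set (Equiv.Perm (Fin n)) :=
  {u | ∀ y ∈ Wfix n j, invCount n u ≤ invCount n (u * y)}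

/-- `(W_j)^{i,j}`: the set of elements of `W_j` of minimal length in their left coset
`z W_{i,j}` inside `W_j`, where `W_{i,j} = W_i ∩ W_j`. -/
def minRepsIn (i j : ℕ) : Set (Equiv.Perm (Fin n)) :=
  {z | z ∈ Wfix n j ∧ ∀ v ∈ Wfix n i ∩ Wfix n j, invCount n z ≤ invCount n (z * v)}


section SchubertAux
set_option linter.unusedSectionVars false

open Finset

variable {F : Type*} [Field F] {n : ℕ}

lemma conj_entry (w : Equiv.Perm (Fin n)) (g : GL (Fin n) F) (i j : Fin n) :
    (((permGL F n w)⁻¹ * g * permGL F n w : GL (Fin n) F) : Matrix (Fin n) (Fin n) F) i j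
      = (g : Matrix (Fin n) (Fin n) F) (w i) (w j) := by
  have h1 : (((permGL F n w)⁻¹ : GL (Fin n) F) : Matrix (Fin n) (Fin n) F)
      = (w : Fin n ≃ Fin n).toPEquiv.toMatrix := rfl
  have h2 : ((permGL F n w : GL (Fin n) F) : Matrix (Fin n) (Fin n) F)
      = ((w⁻¹ : Equiv.Perm (Fin n)) : Fin n ≃ Fin n).toPEquiv.toMatrix := rfl
  show ((((permGL F n w)⁻¹ : GL (Fin n) F) : Matrix (Fin n) (Fin n) F)
      * (g : Matrix (Fin n) (Fin n) F) * ((permGL F n w : GL (Fin n) F) : Matrix (Fin n) (Fin n) F)) i j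
      = _
  rw [h1, h2, PEquiv.toMatrix_toPEquiv_mul, PEquiv.mul_toMatrix_toPEquiv]
  simp [Equiv.Perm.inv_def]

variable [Fintype F]

def patternSet (F : Type*) [Field F] (n : ℕ) (P : Finset (Fin n × Fin n)) :
    Set (GL (Fin n) F) :=
  {g | ∀ i j : Fin n, i ≠ j → (i, j) ∉ P → (g : Matrix (Fin n) (Fin n) F) i j = 0}

lemma patternSet_tri {P : Finset (Fin n × Fin n)} (hP : ∀ p ∈ P, p.1 < p.2)
    {g : GL (Fin n) F} (hg : g ∈ patternSet F n P) :
    BlockTriangular (g : Matrix (Fin n) (Fin n) F) id := by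
  intro i j hij
  exact hg i j (by simp at hij; exact fun h => absurd (h ▸ hij) (lt_irrefl _))
    (fun h => absurd (hP _ h) (by simp at hij ⊢; omega))

lemma mem_Bsub_iff (g : GL (Fin n) F) :
    g ∈ Bsub F n ↔ g ∈ patternSet F n (Finset.univ.filter fun p : Fin n × Fin n => p.1 < p.2) := by
  constructor
  · intro hg i j hij hijP
    have : ¬ (i < j) := by simpa [hij] using hijP
    have hji : j < i := by
      rcases lt_or_gt_of_ne hij with h | h
      · exact absurd h this
      · exact h
    exact hg hji
  · intro hg
    exact patternSet_tri (by simp) hg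

lemma stab_mem_iff (w : Equiv.Perm (Fin n)) (g : GL (Fin n) F) :
    (g ∈ Bsub F n ∧ (permGL F n w)⁻¹ * g * permGL F n w ∈ Bsub F n) ↔
      g ∈ patternSet F n (Finset.univ.filter fun p : Fin n × Fin n =>
        p.1 < p.2 ∧ w⁻¹ p.1 < w⁻¹ p.2) := by
  constructor
  · rintro ⟨hB, hC⟩ i j hij hijP
    simp only [Finset.mem_filter, Finset.mem_univ, true_and, not_and] at hijP
    by_cases hlt : i < j
    · have hne : w⁻¹ i ≠ w⁻¹ j := fun h => hij (w⁻¹.injective h)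
      have h2 : w⁻¹ j < w⁻¹ i := (hne.lt_or_gt).resolve_left (hijP hlt)
      have := hC (show id (w⁻¹ j) < id (w⁻¹ i) from h2)
      rwa [conj_entry, Equiv.Perm.coe_inv, Equiv.apply_symm_apply, Equiv.apply_symm_apply] at this
    · have hji : j < i := (hij.lt_or_gt).resolve_left hlt
      exact hB hji
  · intro hg
    constructor
    · exact patternSet_tri (by simp +contextual) hg
    · intro i j hij
      rw [conj_entry]
      simp only [id_eq] at hij
      have hne : w i ≠ w j := fun h => (ne_of_gt hij) (w.injective h)
      refine hg (w i) (w j) hne ?_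
      simp only [Finset.mem_filter, Finset.mem_univ, true_and, not_and]
      intro hlt
      simp only [Equiv.Perm.coe_inv, Equiv.symm_apply_apply]
      omega

lemma invCount_inv (w : Equiv.Perm (Fin n)) : invCount n w⁻¹ = invCount n w := by
  unfold invCount
  apply Finset.card_bij (fun p _ => ((w⁻¹ p.2 : Fin n), w⁻¹ p.1))
  · rintro ⟨i, j⟩ hp
    simp only [Finset.mem_filter, Finset.mem_univ, true_and] at hp ⊢
    exact ⟨hp.2, by simpa using hp.1⟩
  · rintro ⟨i, j⟩ hi ⟨i', j'⟩ hj h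
    simp only [Prod.mk.injEq] at h ⊢
    exact ⟨w⁻¹.injective h.2, w⁻¹.injective h.1⟩
  · rintro ⟨a, b⟩ hab
    simp only [Finset.mem_filter, Finset.mem_univ, true_and] at hab
    exact ⟨(w b, w a), by simp only [Finset.mem_filter, Finset.mem_univ, true_and]; exact ⟨hab.2, by simpa using hab.1⟩, by simp⟩

lemma card_split (w : Equiv.Perm (Fin n)) :
    (Finset.univ.filter fun p : Fin n × Fin n => p.1 < p.2).card
      = (Finset.univ.filter fun p : Fin n × Fin n =>
          p.1 < p.2 ∧ w⁻¹ p.1 < w⁻¹ p.2).card + invCount n w := by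
  classical
  rw [← invCount_inv w]
  unfold invCount
  rw [← Finset.card_filter_add_card_filter_not
    (p := fun p : Fin n × Fin n => w⁻¹ p.1 < w⁻¹ p.2) (s := Finset.univ.filter fun p : Fin n × Fin n => p.1 < p.2)]
  congr 1
  · rw [Finset.filter_filter]
  · rw [Finset.filter_filter]
    congr 1
    apply Finset.filter_congr
    rintro ⟨i, j⟩ _
    simp only [Finset.mem_univ, iff_iff_implies_and_implies]
    constructor
    · rintro ⟨h1, h2⟩
      have hne : w⁻¹ i ≠ w⁻¹ j := fun h => (ne_of_lt h1) (w⁻¹.injective h)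
      exact ⟨h1, (hne.lt_or_gt).resolve_left h2⟩
    · rintro ⟨h1, h2⟩
      exact ⟨h1, fun h => absurd h2 (asymm h)⟩
lemma card_patternSet (P : Finset (Fin n × Fin n)) (hP : ∀ p ∈ P, p.1 < p.2) :
    Nat.card (patternSet F n P) =
      (Fintype.card F - 1) ^ n * Fintype.card F ^ P.card := by
  classical
  have hM : ∀ (d : Fin n → Fˣ) (c : P → F), ∃ g : GL (Fin n) F,
      (g : Matrix (Fin n) (Fin n) F) = Matrix.of fun i j =>
        if hij : i = j then (d i : F) else if h : (i, j) ∈ P then c ⟨(i, j), h⟩ else 0 := by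
    intro d c
    set M : Matrix (Fin n) (Fin n) F := Matrix.of fun i j =>
        if hij : i = j then (d i : F) else if h : (i, j) ∈ P then c ⟨(i, j), h⟩ else 0 with hMdef
    have htri : BlockTriangular M id := by
      intro i j hij
      have h1 : i ≠ j := by simp at hij; exact fun h => absurd (h ▸ hij) (lt_irrefl _)
      have h2 : (i, j) ∉ P := fun h => absurd (hP _ h) (by simp at hij ⊢; omega)
      simp [hMdef, h1, h2]
    have hdet : M.det ≠ 0 := by
      rw [Matrix.det_of_upperTriangular htri]
      refine Finset.prod_ne_zero_iff.2 fun i _ => ?_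
      simp [hMdef]
    have : IsUnit M := (Matrix.isUnit_iff_isUnit_det M).2 (isUnit_iff_ne_zero.2 hdet)
    exact ⟨this.unit, this.unit_spec⟩
  choose f hf using hM
  have hfmem : ∀ d c, f d c ∈ patternSet F n P := by
    intro d c i j hij hijP
    rw [hf d c]
    simp [hij, hijP]
  have hbij : Function.Bijective
      (fun dc : (Fin n → Fˣ) × (P → F) => (⟨f dc.1 dc.2, hfmem dc.1 dc.2⟩ : patternSet F n P)) := by
    constructor
    · rintro ⟨d, c⟩ ⟨d', c'⟩ h
      simp only [Subtype.mk.injEq] at h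
      have h2 : ((f d c : GL (Fin n) F) : Matrix (Fin n) (Fin n) F)
          = ((f d' c' : GL (Fin n) F) : Matrix (Fin n) (Fin n) F) := by rw [h]
      rw [hf d c, hf d' c'] at h2
      have hd : d = d' := by
        funext i
        have := congrFun (congrFun h2 i) i
        simp only [Matrix.of_apply, dif_pos rfl] at this
        exact Units.ext this
      have hc : c = c' := by
        funext p
        have hne : p.1.1 ≠ p.1.2 := (hP _ p.2).ne
        have := congrFun (congrFun h2 p.1.1) p.1.2
        simpa [Matrix.of_apply, hne, p.2] using this
      exact Prod.ext hd hc
    · rintro ⟨g, hg⟩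
      have htri := patternSet_tri hP hg
      have hdet : IsUnit (g : Matrix (Fin n) (Fin n) F).det :=
        (Matrix.isUnit_iff_isUnit_det _).1 g.isUnit
      rw [Matrix.det_of_upperTriangular htri] at hdet
      have hdiag : ∀ i : Fin n, (g : Matrix (Fin n) (Fin n) F) i i ≠ 0 := by
        intro i
        have := hdet.ne_zero
        exact Finset.prod_ne_zero_iff.1 this i (Finset.mem_univ i)
      refine ⟨⟨fun i => Units.mk0 _ (hdiag i), fun p => (g : Matrix (Fin n) (Fin n) F) p.1.1 p.1.2⟩, ?_⟩
      apply Subtype.ext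
      apply Units.ext
      rw [hf]
      ext i j
      by_cases hij : i = j
      · subst hij; simp
      · by_cases hijP : (i, j) ∈ P
        · simp [hij, hijP]
        · simp [hij, hijP, hg i j hij hijP]
  calc Nat.card (patternSet F n P) = Nat.card ((Fin n → Fˣ) × (P → F)) :=
        (Nat.card_eq_of_bijective _ hbij).symm
    _ = (Fintype.card F - 1) ^ n * Fintype.card F ^ P.card := by
        simp [Nat.card_prod, Nat.card_fun, Nat.card_units, Nat.card_eq_finsetCard, Fintype.card_units,
          Nat.card_eq_fintype_card]

set_option synthInstance.maxHeartbeats 1000000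
set_option maxHeartbeats 1000000

lemma mem_stab_iff (w : Equiv.Perm (Fin n)) (b : Bsub F n) :
    b ∈ MulAction.stabilizer (Bsub F n)
        ((QuotientGroup.mk (permGL F n w)) : GL (Fin n) F ⧸ Bsub F n) ↔
      (permGL F n w)⁻¹ * ↑b * permGL F n w ∈ Bsub F n := by
  rw [MulAction.mem_stabilizer_iff]
  show (b : GL (Fin n) F) • ((QuotientGroup.mk (permGL F n w)) : GL (Fin n) F ⧸ Bsub F n) = _ ↔ _
  rw [MulAction.Quotient.smul_mk,
    smul_eq_mul, QuotientGroup.eq]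
  have h : ((b : GL (Fin n) F) * permGL F n w)⁻¹ * permGL F n w
      = ((permGL F n w)⁻¹ * ↑b * permGL F n w)⁻¹ := by group
  rw [h, inv_mem_iff]

lemma orbit_eq (w : Equiv.Perm (Fin n)) :
    {x : GL (Fin n) F ⧸ Bsub F n | ∃ g ∈ doubleCoset F n w, QuotientGroup.mk g = x}
      = MulAction.orbit (Bsub F n)
          ((QuotientGroup.mk (permGL F n w)) : GL (Fin n) F ⧸ Bsub F n) := by
  ext x
  constructor
  · rintro ⟨g, ⟨b₁, hb₁, b₂, hb₂, rfl⟩, rfl⟩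
    exact ⟨⟨b₁, hb₁⟩, (QuotientGroup.mk_mul_of_mem (b₁ * permGL F n w) hb₂).symm⟩
  · rintro ⟨b, rfl⟩
    refine ⟨↑b * permGL F n w, ⟨↑b, b.2, 1, (Bsub F n).one_mem, by rw [mul_one]⟩, ?_⟩
    rfl

end SchubertAux

set_option synthInstance.maxHeartbeats 1000000 in
set_option maxHeartbeats 1000000 in
/-- **Cardinality of Schubert cells over a finite field.**
Over `F = 𝔽_q`, the Schubert cell `BwB/B` has exactly `q^{ℓ(w)}` elements, where `ℓ(w)` is
the number of inversions of `w`. -/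
theorem schubert_cell_card (q : ℕ) (hq : IsPrimePow q)
    (F : Type*) [Field F] [Fintype F] (hF : Fintype.card F = q)
    (n : ℕ) (hn : 2 ≤ n) (w : Equiv.Perm (Fin n)) :
    Set.ncard {x : GL (Fin n) F ⧸ Bsub F n | ∃ g ∈ doubleCoset F n w, QuotientGroup.mk g = x} =
      q ^ invCount n w := by
  classical
  subst hF
  rw [orbit_eq, ← Nat.card_coe_set_eq]
  set a := (Finset.univ.filter fun p : Fin n × Fin n =>
    p.1 < p.2 ∧ w⁻¹ p.1 < w⁻¹ p.2).card with ha
  set K := MulAction.stabilizer (Bsub F n)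
    ((QuotientGroup.mk (permGL F n w)) : GL (Fin n) F ⧸ Bsub F n) with hK
  have h1 : Nat.card (MulAction.orbit (Bsub F n)
      ((QuotientGroup.mk (permGL F n w)) : GL (Fin n) F ⧸ Bsub F n))
      = Nat.card (↥(Bsub F n) ⧸ K) :=
    Nat.card_congr (MulAction.orbitEquivQuotientStabilizer _ _)
  have h2 := Subgroup.card_eq_card_quotient_mul_card_subgroup K
  have hB : Nat.card ↥(Bsub F n)
      = (Fintype.card F - 1) ^ n * Fintype.card F ^
          (Finset.univ.filter fun p : Fin n × Fin n => p.1 < p.2).card := by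
    rw [← card_patternSet _ (by simp)]
    exact Nat.card_congr (Equiv.subtypeEquivRight fun g => mem_Bsub_iff g)
  have hKcard : Nat.card K = (Fintype.card F - 1) ^ n * Fintype.card F ^ a := by
    rw [← card_patternSet _ (by exact fun p hp => (Finset.mem_filter.1 hp).2.1)]
    refine Nat.card_congr ?_
    exact
      { toFun := fun b => ⟨b.1.1, (stab_mem_iff w b.1.1).1 ⟨b.1.2, (mem_stab_iff w b.1).1 b.2⟩⟩
        invFun := fun g => ⟨⟨g.1, ((stab_mem_iff w g.1).2 g.2).1⟩,
          (mem_stab_iff w _).2 ((stab_mem_iff w g.1).2 g.2).2⟩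
        left_inv := fun b => Subtype.ext (Subtype.ext rfl)
        right_inv := fun g => rfl }
  rw [h1]
  rw [hB, hKcard, card_split w, ← ha, pow_add] at h2
  have h3 : ((Fintype.card F - 1) ^ n * Fintype.card F ^ a) * Fintype.card F ^ invCount n w
      = ((Fintype.card F - 1) ^ n * Fintype.card F ^ a) * Nat.card (↥(Bsub F n) ⧸ K) := by
    rw [mul_comm ((Fintype.card F - 1) ^ n * Fintype.card F ^ a)
      (Nat.card (↥(Bsub F n) ⧸ K)), ← h2]
    ring
  have hpos : 0 < (Fintype.card F - 1) ^ n * Fintype.card F ^ a := by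
    have h4 : 1 < Fintype.card F := Fintype.one_lt_card
    have : 0 < Fintype.card F - 1 := by omega
    exact Nat.mul_pos (Nat.pow_pos (n := n) this) (Nat.pow_pos (n := a) (by omega))
  exact (Nat.eq_of_mul_eq_mul_left hpos h3).symm
end

section
/- Corollary 4.4 for GL_n over a finite field: fix 1 ≤ i, j ≤ n−1 with i ≠ j and w ∈ S_n. Every line of the Schubert incidence structure (X_w)_{ij} is incident to at most two points if and only if: w ∈ W^j W_{i,j} when q > 2, and w ∈ W^j W_{i,j} ∪ W^j s_i W_{i,j} when q = 2 (where s_i is the adjacent transposition (i, i+1)). Equivalently, in the unique factorization w = u z v with u ∈ W^j, z ∈ (W_j)^{i,j}, v ∈ W_{i,j}, the condition is z = 1 when q > 2 and z ∈ {1, s_i} when q = 2. -/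
open Matrix

variable (F : Type*) [Field F] (n : ℕ)

-- ============ my lemmas ============
variable {F n}

lemma mem_Bsub_iff_s8 {g : GL (Fin n) F} :
    g ∈ Bsub F n ↔ ∀ a b : Fin n, (b : ℕ) < (a : ℕ) → (g : Matrix (Fin n) (Fin n) F) a b = 0 := by
  constructor
  · intro hg a b hba
    exact hg (show (id b : Fin n) < id a from Fin.lt_def.mpr hba)
  · intro hg a b hba
    exact hg a b (Fin.lt_def.mp hba)

lemma mem_Pmax_iff {g : GL (Fin n) F} {j : ℕ} :
    g ∈ Pmax F n j ↔ ∀ a b : Fin n, (b : ℕ) < j → j ≤ (a : ℕ) →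
      (g : Matrix (Fin n) (Fin n) F) a b = 0 := by
  constructor
  · intro hg a b hb ha
    refine hg ?_
    simp only [if_pos hb, if_neg (by omega : ¬ (a:ℕ) < j)]
    omega
  · intro hg a b hab
    by_cases hb : (b : ℕ) < j
    · by_cases ha : (a : ℕ) < j
      · simp [hb, ha] at hab
      · exact hg a b hb (by omega)
    · by_cases ha : (a : ℕ) < j <;> simp [hb, ha] at hab

lemma Bsub_le_Pmax {g : GL (Fin n) F} {j : ℕ} (hg : g ∈ Bsub F n) : g ∈ Pmax F n j := by
  rw [mem_Bsub_iff_s8] at hg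
  rw [mem_Pmax_iff]
  intro a b hb ha
  exact hg a b (by omega)

lemma permGL_val_apply (w : Equiv.Perm (Fin n)) (a b : Fin n) :
    (permGL F n w : Matrix (Fin n) (Fin n) F) a b = if w b = a then 1 else 0 := by
  show ((w⁻¹).permMatrix F) a b = _
  rw [Equiv.Perm.permMatrix, PEquiv.toMatrix_apply, Equiv.toPEquiv_apply]
  by_cases h : w b = a
  · rw [if_pos, if_pos h]
    simp [← h]
  · rw [if_neg, if_neg h]
    simp only [Option.mem_def, Option.some.injEq]
    intro hc
    exact h (by rw [← hc]; simp)

lemma permGL_mul (σ τ : Equiv.Perm (Fin n)) :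
    permGL F n (σ * τ) = permGL F n σ * permGL F n τ := by
  apply Units.ext
  show ((σ * τ)⁻¹).permMatrix F = (σ⁻¹).permMatrix F * (τ⁻¹).permMatrix F
  rw [Equiv.Perm.permMatrix, Equiv.Perm.permMatrix, Equiv.Perm.permMatrix,
    ← PEquiv.toMatrix_trans, ← Equiv.toPEquiv_trans]
  congr 1

lemma permGL_one : permGL F n 1 = 1 := by
  apply Units.ext
  show ((1 : Equiv.Perm (Fin n))⁻¹).permMatrix F = 1
  rw [inv_one]
  show (Equiv.refl (Fin n)).toPEquiv.toMatrix = 1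
  rw [Equiv.toPEquiv_refl, PEquiv.toMatrix_refl]

lemma permGL_inv (σ : Equiv.Perm (Fin n)) : (permGL F n σ)⁻¹ = permGL F n σ⁻¹ := by
  symm
  apply eq_inv_of_mul_eq_one_right
  rw [← permGL_mul, mul_inv_cancel, permGL_one]

-- appended to partA for testing
lemma permGL_mulVec (σ : Equiv.Perm (Fin n)) (v : Fin n → F) :
    (permGL F n σ : Matrix (Fin n) (Fin n) F) *ᵥ v = fun a => v (σ⁻¹ a) := by
  funext a
  show ∑ b, (permGL F n σ : Matrix (Fin n) (Fin n) F) a b * v b = _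
  rw [Fintype.sum_eq_single (σ⁻¹ a)]
  · rw [permGL_val_apply, if_pos (by simp), one_mul]
  · intro b hb
    rw [permGL_val_apply, if_neg, zero_mul]
    intro hc; exact hb (by rw [← hc]; simp)

lemma permGL_mul_apply (σ : Equiv.Perm (Fin n)) (A : Matrix (Fin n) (Fin n) F) (a b : Fin n) :
    ((permGL F n σ : Matrix (Fin n) (Fin n) F) * A) a b = A (σ⁻¹ a) b := by
  rw [Matrix.mul_apply, Fintype.sum_eq_single (σ⁻¹ a)]
  · rw [permGL_val_apply, if_pos (by simp), one_mul]
  · intro c hc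
    rw [permGL_val_apply, if_neg, zero_mul]
    intro h; exact hc (by rw [← h]; simp)

lemma mul_permGL_apply (σ : Equiv.Perm (Fin n)) (A : Matrix (Fin n) (Fin n) F) (a b : Fin n) :
    (A * (permGL F n σ : Matrix (Fin n) (Fin n) F)) a b = A a (σ b) := by
  rw [Matrix.mul_apply, Fintype.sum_eq_single (σ b)]
  · rw [permGL_val_apply, if_pos rfl, mul_one]
  · intro c hc
    rw [permGL_val_apply, if_neg (fun h => hc (by rw [h])), mul_zero]

lemma conj_permGL_apply (σ : Equiv.Perm (Fin n)) (m : GL (Fin n) F) (a b : Fin n) :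
    ((permGL F n σ * m * (permGL F n σ)⁻¹ : GL (Fin n) F) : Matrix (Fin n) (Fin n) F) a b
      = (m : Matrix (Fin n) (Fin n) F) (σ⁻¹ a) (σ⁻¹ b) := by
  rw [permGL_inv, Units.val_mul, Units.val_mul, mul_permGL_apply, permGL_mul_apply]

/-- The column space condition set `U_i`. -/
def colset (F : Type*) [Field F] (n i : ℕ) : Set (Fin n → F) :=
  {v | ∀ a : Fin n, i ≤ (a : ℕ) → v a = 0}

/-- Action of `GL` on sets of vectors. -/
def actGL (g : GL (Fin n) F) (S : Set (Fin n → F)) : Set (Fin n → F) :=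
  (fun v => (g : Matrix (Fin n) (Fin n) F) *ᵥ v) '' S

lemma actGL_mul (g h : GL (Fin n) F) (S : Set (Fin n → F)) :
    actGL (g * h) S = actGL g (actGL h S) := by
  unfold actGL
  rw [← Set.image_comp]
  apply Set.image_congr
  intro v _
  simp [Matrix.mulVec_mulVec]

lemma actGL_one (S : Set (Fin n → F)) : actGL (1 : GL (Fin n) F) S = S := by
  unfold actGL
  have : (fun v : Fin n → F => ((1 : GL (Fin n) F) : Matrix (Fin n) (Fin n) F) *ᵥ v) = id := by
    funext v
    simp [Matrix.one_mulVec]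
  rw [this, Set.image_id]

lemma actGL_cancel {g : GL (Fin n) F} {S T : Set (Fin n → F)}
    (h : actGL g S = actGL g T) : S = T := by
  have := congrArg (actGL g⁻¹) h
  rwa [← actGL_mul, ← actGL_mul, inv_mul_cancel, actGL_one, actGL_one] at this

lemma mulVec_mem_colset {g : GL (Fin n) F} {i : ℕ} (hg : g ∈ Pmax F n i)
    {v : Fin n → F} (hv : v ∈ colset F n i) :
    (g : Matrix (Fin n) (Fin n) F) *ᵥ v ∈ colset F n i := by
  intro a ha
  show ∑ b, (g : Matrix (Fin n) (Fin n) F) a b * v b = 0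
  apply Finset.sum_eq_zero
  intro b _
  by_cases hb : (b : ℕ) < i
  · rw [mem_Pmax_iff.mp hg a b hb ha, zero_mul]
  · rw [hv b (by omega), mul_zero]

lemma mem_Pmax_iff_actGL {g : GL (Fin n) F} {i : ℕ} :
    g ∈ Pmax F n i ↔ actGL g (colset F n i) = colset F n i := by
  constructor
  · intro hg
    apply Set.eq_of_subset_of_subset
    · rintro x ⟨v, hv, rfl⟩
      exact mulVec_mem_colset hg hv
    · intro v hv
      refine ⟨(g⁻¹ : GL (Fin n) F) *ᵥ v, mulVec_mem_colset ((Pmax F n i).inv_mem hg) hv, ?_⟩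
      show (g : Matrix (Fin n) (Fin n) F) *ᵥ ((g⁻¹ : GL (Fin n) F) : Matrix (Fin n) (Fin n) F) *ᵥ v = v
      rw [Matrix.mulVec_mulVec, ← Units.val_mul, mul_inv_cancel, Units.val_one,
        Matrix.one_mulVec]
  · intro hA
    rw [mem_Pmax_iff]
    intro a b hb ha
    have hmem : (Pi.single b (1:F) : Fin n → F) ∈ colset F n i := by
      intro c hc
      apply Pi.single_eq_of_ne
      intro hcb; subst hcb; omega
    have : (g : Matrix (Fin n) (Fin n) F) *ᵥ Pi.single b 1 ∈ colset F n i := by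
      rw [← hA]; exact ⟨_, hmem, rfl⟩
    have := this a ha
    rw [Matrix.mulVec_single] at this
    simpa using this

lemma mk_eq_mk_iff_actGL {i : ℕ} {k k' : GL (Fin n) F} :
    (QuotientGroup.mk k : GL (Fin n) F ⧸ Pmax F n i) = QuotientGroup.mk k' ↔
      actGL k (colset F n i) = actGL k' (colset F n i) := by
  rw [QuotientGroup.eq, mem_Pmax_iff_actGL]
  constructor
  · intro h
    have := congrArg (actGL k) h
    rw [← actGL_mul, ← mul_assoc, mul_inv_cancel, one_mul] at this
    exact this.symm
  · intro h
    rw [actGL_mul]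
    rw [← h, ← actGL_mul, inv_mul_cancel, actGL_one]

-- ===== Wfix pointwise lemmas =====
lemma wfix_lt {σ : Equiv.Perm (Fin n)} {j : ℕ} (hσ : σ ∈ Wfix n j) {a : Fin n}
    (ha : (a : ℕ) < j) : ((σ a : Fin n) : ℕ) < j := by
  have : σ a ∈ (fun a => σ a) '' {a : Fin n | (a : ℕ) < j} := ⟨a, ha, rfl⟩
  rw [hσ] at this
  exact this

lemma wfix_ge {σ : Equiv.Perm (Fin n)} {j : ℕ} (hσ : σ ∈ Wfix n j) {a : Fin n}
    (ha : j ≤ (a : ℕ)) : j ≤ ((σ a : Fin n) : ℕ) := by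
  by_contra hlt
  push_neg at hlt
  have h2 : σ a ∈ {x : Fin n | (x : ℕ) < j} := hlt
  rw [← hσ] at h2
  obtain ⟨b, hb, hba⟩ := h2
  have hba' : σ b = σ a := hba
  have hb' : (b : ℕ) < j := hb
  have heq : b = a := σ.injective hba'
  rw [heq] at hb'
  omega

lemma wfix_iff {σ : Equiv.Perm (Fin n)} {j : ℕ} (hσ : σ ∈ Wfix n j) (a : Fin n) :
    ((σ a : Fin n) : ℕ) < j ↔ (a : ℕ) < j := by
  constructor
  · intro h; by_contra h'; push_neg at h'; have := wfix_ge hσ h'; omega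
  · exact wfix_lt hσ

lemma swap_mem_Wfix {x y : Fin n} {j : ℕ} (hxy : (x : ℕ) < j ↔ (y : ℕ) < j) :
    Equiv.swap x y ∈ Wfix n j := by
  show (fun a => Equiv.swap x y a) '' _ = _
  apply Set.eq_of_subset_of_subset
  · rintro c ⟨d, hd, rfl⟩
    show Equiv.swap x y d ∈ {a : Fin n | (a : ℕ) < j}
    have hd' : (d : ℕ) < j := hd
    by_cases hdx : d = x
    · subst hdx; rw [Set.mem_setOf_eq, Equiv.swap_apply_left]; exact hxy.mp hd'
    · by_cases hdy : d = y
      · subst hdy; rw [Set.mem_setOf_eq, Equiv.swap_apply_right]; exact hxy.mpr hd'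
      · rw [Set.mem_setOf_eq, Equiv.swap_apply_of_ne_of_ne hdx hdy]; exact hd'
  · intro c hc
    refine ⟨Equiv.swap x y c, ?_, by simp⟩
    by_cases hcx : c = x
    · subst hcx; rw [Equiv.swap_apply_left]; exact hxy.mp hc
    · by_cases hcy : c = y
      · subst hcy; rw [Equiv.swap_apply_right]; exact hxy.mpr hc
      · rwa [Equiv.swap_apply_of_ne_of_ne hcx hcy]

lemma permGL_mem_Pmax {σ : Equiv.Perm (Fin n)} {j : ℕ} (hσ : σ ∈ Wfix n j) :
    permGL F n σ ∈ Pmax F n j := by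
  rw [mem_Pmax_iff]
  intro a b hb ha
  rw [permGL_val_apply, if_neg]
  intro h
  have := wfix_lt hσ hb
  rw [h] at this
  omega

-- ===== zcolSet =====
/-- The image of `colset` under a permutation matrix. -/
def zcolSet (F : Type*) [Field F] {n : ℕ} (σ : Equiv.Perm (Fin n)) (i : ℕ) : Set (Fin n → F) :=
  {v | ∀ x : Fin n, i ≤ ((σ⁻¹ x : Fin n) : ℕ) → v x = 0}

lemma actGL_permGL_colset (σ : Equiv.Perm (Fin n)) (i : ℕ) :
    actGL (permGL F n σ) (colset F n i) = zcolSet F σ i := by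
  apply Set.eq_of_subset_of_subset
  · rintro w ⟨v, hv, rfl⟩
    show (permGL F n σ : Matrix (Fin n) (Fin n) F) *ᵥ v ∈ zcolSet F σ i
    rw [permGL_mulVec]
    intro x hx
    exact hv _ hx
  · intro w hw
    refine ⟨fun a => w (σ a), ?_, ?_⟩
    · intro a ha
      exact hw (σ a) (by simpa using ha)
    · show (permGL F n σ : Matrix (Fin n) (Fin n) F) *ᵥ (fun a => w (σ a)) = w
      rw [permGL_mulVec]
      funext x
      simp

lemma zcolSet_one (i : ℕ) : zcolSet F (1 : Equiv.Perm (Fin n)) i = colset F n i := rfl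

-- ===== transvection basics =====
lemma elemGL_val_apply (a b : Fin n) (hab : a ≠ b) (c : F) (x y : Fin n) :
    (elemGL F n a b hab c : Matrix (Fin n) (Fin n) F) x y
      = (if x = y then 1 else 0) + (if x = a ∧ y = b then c else 0) := by
  show Matrix.transvection a b c x y = _
  rw [Matrix.transvection]
  rw [Matrix.add_apply, Matrix.one_apply]
  congr 1
  rw [Matrix.single]
  by_cases h1 : a = x <;> by_cases h2 : b = y <;>
    simp [h1, h2, eq_comm, and_comm]

lemma elemGL_mulVec (a b : Fin n) (hab : a ≠ b) (c : F) (v : Fin n → F) :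
    (elemGL F n a b hab c : Matrix (Fin n) (Fin n) F) *ᵥ v
      = fun x => v x + (if x = a then c * v b else 0) := by
  funext x
  show ∑ y, (elemGL F n a b hab c : Matrix (Fin n) (Fin n) F) x y * v y = _
  have : ∀ y, (elemGL F n a b hab c : Matrix (Fin n) (Fin n) F) x y * v y
      = (if x = y then 1 else 0) * v y + (if x = a ∧ y = b then c else 0) * v y := by
    intro y; rw [elemGL_val_apply, add_mul]
  rw [Finset.sum_congr rfl (fun y _ => this y), Finset.sum_add_distrib]
  congr 1
  · rw [Fintype.sum_eq_single x]
    · rw [if_pos rfl, one_mul]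
    · intro y hy; rw [if_neg (fun h => hy h.symm), zero_mul]
  · rw [Fintype.sum_eq_single b]
    · by_cases hx : x = a
      · rw [if_pos ⟨hx, rfl⟩, if_pos hx]
      · rw [if_neg (fun h : x = a ∧ b = b => hx h.1), if_neg hx, zero_mul]
    · intro y hy; rw [if_neg (fun h => hy h.2), zero_mul]

-- ===== the orbit sets for the forward direction =====
/-- `Vinv a b t` : vectors supported on `z({0..i-1}) ∪ {a}` with `v a = t * v b`. -/
def Vinv (F : Type*) [Field F] {n : ℕ} (σ : Equiv.Perm (Fin n)) (i : ℕ) (a b : Fin n) (t : F) :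
    Set (Fin n → F) :=
  {v | (∀ x : Fin n, x ≠ a → i ≤ ((σ⁻¹ x : Fin n) : ℕ) → v x = 0) ∧ v a = t * v b}

lemma actGL_elemGL_zcolSet {σ : Equiv.Perm (Fin n)} {i : ℕ} {a b : Fin n} (hab : a ≠ b)
    (ha : i ≤ ((σ⁻¹ a : Fin n) : ℕ)) (t : F) :
    actGL (elemGL F n a b hab t) (zcolSet F σ i) = Vinv F σ i a b t := by
  apply Set.eq_of_subset_of_subset
  · rintro w ⟨v, hv, rfl⟩
    show (elemGL F n a b hab t : Matrix (Fin n) (Fin n) F) *ᵥ v ∈ Vinv F σ i a b t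
    rw [elemGL_mulVec]
    constructor
    · intro x hx hix
      beta_reduce
      rw [if_neg hx, hv x hix, add_zero]
    · beta_reduce
      rw [if_pos rfl, if_neg (Ne.symm hab), hv a ha, zero_add, add_zero]
  · intro v hv
    refine ⟨fun x => if x = a then 0 else v x, ?_, ?_⟩
    · intro x hx
      beta_reduce
      by_cases hxa : x = a
      · rw [if_pos hxa]
      · rw [if_neg hxa]; exact hv.1 x hxa hx
    · show (elemGL F n a b hab t : Matrix (Fin n) (Fin n) F) *ᵥ _ = v
      rw [elemGL_mulVec]
      funext x
      beta_reduce
      by_cases hxa : x = a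
      · subst hxa
        rw [if_pos rfl, if_pos rfl, if_neg (Ne.symm hab), zero_add, ← hv.2]
      · rw [if_neg hxa, if_neg hxa, add_zero]

lemma Vinv_zero {σ : Equiv.Perm (Fin n)} {i : ℕ} {a b : Fin n}
    (ha : i ≤ ((σ⁻¹ a : Fin n) : ℕ)) :
    Vinv F σ i a b 0 = zcolSet F σ i := by
  apply Set.eq_of_subset_of_subset
  · rintro v ⟨h1, h2⟩
    intro x hx
    by_cases hxa : x = a
    · subst hxa; rw [h2, zero_mul]
    · exact h1 x hxa hx
  · intro v hv
    exact ⟨fun x hx hix => hv x hix, by rw [hv a ha, zero_mul]⟩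

/-- witness vector for distinguishing the `Vinv` sets -/
lemma Vinv_witness {σ : Equiv.Perm (Fin n)} {i : ℕ} {a b : Fin n}
    (ha : i ≤ ((σ⁻¹ a : Fin n) : ℕ)) (hb : ((σ⁻¹ b : Fin n) : ℕ) < i) (t : F) :
    (fun x => if x = b then 1 else if x = a then t else (0:F)) ∈ Vinv F σ i a b t := by
  have hab : a ≠ b := by intro h; rw [h] at ha; omega
  constructor
  · intro x hx hix
    beta_reduce
    rw [if_neg, if_neg hx]
    intro hxb; subst hxb; omega
  · beta_reduce
    rw [if_neg hab, if_pos rfl, if_pos rfl, mul_one]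

lemma Vinv_ne_of_t_ne {σ : Equiv.Perm (Fin n)} {i : ℕ} {a b : Fin n}
    (ha : i ≤ ((σ⁻¹ a : Fin n) : ℕ)) (hb : ((σ⁻¹ b : Fin n) : ℕ) < i) {t s : F} (hts : t ≠ s) :
    Vinv F σ i a b t ≠ Vinv F σ i a b s := by
  have hab : a ≠ b := by intro h; rw [h] at ha; omega
  intro heq
  have hw := Vinv_witness ha hb t
  rw [heq] at hw
  have h2 := hw.2
  beta_reduce at h2
  rw [if_neg hab, if_pos rfl, if_pos rfl, mul_one] at h2
  exact hts h2

lemma Vinv_ne_of_pair_ne {σ : Equiv.Perm (Fin n)} {i : ℕ} {a b a' b' : Fin n}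
    (ha : i ≤ ((σ⁻¹ a : Fin n) : ℕ)) (hb : ((σ⁻¹ b : Fin n) : ℕ) < i)
    (ha' : i ≤ ((σ⁻¹ a' : Fin n) : ℕ)) (hb' : ((σ⁻¹ b' : Fin n) : ℕ) < i)
    (hne : (a, b) ≠ (a', b')) :
    Vinv F σ i a b 1 ≠ Vinv F σ i a' b' 1 := by
  have hab : a ≠ b := by intro h; rw [h] at ha; omega
  intro heq
  have hw := Vinv_witness ha hb (1 : F)
  rw [heq] at hw
  by_cases haa : a = a'
  · have hbb : b ≠ b' := by
      intro h; exact hne (by rw [haa, h])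
    have h2 := hw.2
    beta_reduce at h2
    have hvb' : (if b' = b then (1:F) else if b' = a then 1 else 0) = 0 := by
      rw [if_neg (Ne.symm hbb), if_neg]
      intro h; rw [h] at hb'; omega
    rw [hvb', ← haa, if_neg hab, if_pos rfl, mul_zero] at h2
    exact one_ne_zero h2
  · have h1 := hw.1 a (fun h => haa h) ha
    beta_reduce at h1
    rw [if_neg hab, if_pos rfl] at h1
    exact one_ne_zero h1

-- ===== field cardinality helpers =====
lemma field_card_two [Fintype F] (hF : Fintype.card F = 2) (t : F) : t = 0 ∨ t = 1 := by
  classical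
  by_contra h
  push_neg at h
  have hsub : ({0, 1, t} : Finset F) ⊆ Finset.univ := Finset.subset_univ _
  have hcard : ({0, 1, t} : Finset F).card = 3 := by
    rw [Finset.card_insert_of_notMem, Finset.card_insert_of_notMem, Finset.card_singleton]
    · simp [Ne.symm h.2]
    · simp [zero_ne_one, Ne.symm h.1]
  have := Finset.card_le_card hsub
  rw [hcard, Finset.card_univ, hF] at this
  omega

lemma field_card_three [Fintype F] (h : 3 ≤ Fintype.card F) : ∃ t : F, t ≠ 0 ∧ t ≠ 1 := by
  classical
  by_contra hcon
  push_neg at hcon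
  have hsub : (Finset.univ : Finset F) ⊆ {0, 1} := by
    intro t _
    by_cases ht : t = 0
    · simp [ht]
    · simp [hcon t ht]
  have := Finset.card_le_card hsub
  have h2 : ({0, 1} : Finset F).card ≤ 2 := Finset.card_insert_le _ _ |>.trans (by simp)
  rw [Finset.card_univ] at this
  omega

-- ===== upper bound lemma for z = s_i =====
section upperbound

variable {p q : Fin n}

/-- `W = span(e_0,…,e_{i-2}, e_i)` as a set, where `p, q` have indices `i-1, i`. -/
def Wswap (F : Type*) [Field F] {n : ℕ} (p q : Fin n) : Set (Fin n → F) :=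
  {v | v p = 0 ∧ ∀ x : Fin n, (q : ℕ) < (x : ℕ) → v x = 0}

def Vswap (F : Type*) [Field F] {n : ℕ} (p q : Fin n) (t : F) : Set (Fin n → F) :=
  {v | v p = t * v q ∧ ∀ x : Fin n, (q : ℕ) < (x : ℕ) → v x = 0}

lemma zcolSet_swap {i : ℕ} (hpq : (p : ℕ) + 1 = (q : ℕ)) (hq : (q : ℕ) = i) :
    zcolSet F (Equiv.swap p q) i = Wswap F p q := by
  have hpqne : p ≠ q := fun h => by rw [h] at hpq; omega
  ext v
  constructor
  · intro hv
    constructor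
    · refine hv p ?_
      rw [Equiv.swap_inv, Equiv.swap_apply_left]
      omega
    · intro x hx
      refine hv x ?_
      rw [Equiv.swap_inv, Equiv.swap_apply_of_ne_of_ne (fun h => by subst h; omega)
        (fun h => by subst h; omega)]
      omega
  · rintro ⟨h1, h2⟩ x hx
    rw [Equiv.swap_inv] at hx
    by_cases hxp : x = p
    · subst hxp; exact h1
    · by_cases hxq : x = q
      · subst hxq
        rw [Equiv.swap_apply_right] at hx
        omega
      · rw [Equiv.swap_apply_of_ne_of_ne hxp hxq] at hx
        exact h2 x (by omega)

lemma Vswap_ne {t s : F} (hts : t ≠ s) (hpq : (p : ℕ) + 1 = (q : ℕ)) :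
    Vswap F p q t ≠ Vswap F p q s := by
  have hpqne : p ≠ q := fun h => by rw [h] at hpq; omega
  intro heq
  have hw : (fun x => if x = q then 1 else if x = p then t else (0:F)) ∈ Vswap F p q t := by
    constructor
    · beta_reduce
      rw [if_neg hpqne, if_pos rfl, if_pos rfl, mul_one]
    · intro x hx
      beta_reduce
      rw [if_neg (fun h => by subst h; omega), if_neg (fun h => by subst h; omega)]
  rw [heq] at hw
  have h2 := hw.1
  beta_reduce at h2
  rw [if_neg hpqne, if_pos rfl, if_pos rfl, mul_one] at h2
  exact hts h2

lemma tri_actGL_Wswap (m : GL (Fin n) F)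
    (htri : ∀ a b : Fin n, (b : ℕ) < (a : ℕ) → (m : Matrix (Fin n) (Fin n) F) a b = 0)
    (htri' : ∀ a b : Fin n, (b : ℕ) < (a : ℕ) →
      ((m⁻¹ : GL (Fin n) F) : Matrix (Fin n) (Fin n) F) a b = 0)
    (hpq : (p : ℕ) + 1 = (q : ℕ)) :
    ∃ t : F, actGL m (Wswap F p q) = Vswap F p q t := by
  classical
  set M : Matrix (Fin n) (Fin n) F := (m : Matrix (Fin n) (Fin n) F) with hM
  set M' : Matrix (Fin n) (Fin n) F := ((m⁻¹ : GL (Fin n) F) : Matrix (Fin n) (Fin n) F) with hM'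
  have hpqne : p ≠ q := fun h => by rw [h] at hpq; omega
  have hprod : M * M' = 1 := by
    rw [hM, hM', ← Units.val_mul, mul_inv_cancel, Units.val_one]
  -- entry identities
  have hentry : ∀ x y : Fin n, ∑ c, M x c * M' c y = (1 : Matrix (Fin n) (Fin n) F) x y := by
    intro x y; rw [← Matrix.mul_apply, hprod]
  have hqq : M q q * M' q q = 1 := by
    have := hentry q q
    rw [Matrix.one_apply_eq] at this
    rw [← this]
    rw [Fintype.sum_eq_single q]
    intro c hc
    rcases lt_or_gt_of_ne (fun h : (c:ℕ) = (q:ℕ) => hc (Fin.ext h)) with h | h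
    · rw [htri q c h, zero_mul]
    · rw [htri' c q h, mul_zero]
  have hpp : M p p * M' p p = 1 := by
    have := hentry p p
    rw [Matrix.one_apply_eq] at this
    rw [← this]
    rw [Fintype.sum_eq_single p]
    intro c hc
    rcases lt_or_gt_of_ne (fun h : (c:ℕ) = (p:ℕ) => hc (Fin.ext h)) with h | h
    · rw [htri p c h, zero_mul]
    · rw [htri' c p h, mul_zero]
  have hpq0 : M p p * M' p q + M p q * M' q q = 0 := by
    have h0 := hentry p q
    rw [Matrix.one_apply_ne hpqne] at h0
    rw [← h0]
    have hvanish : ∀ c ∈ (Finset.univ : Finset (Fin n)), c ∉ ({p, q} : Finset (Fin n)) →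
        M p c * M' c q = 0 := by
      intro c _ hc
      simp only [Finset.mem_insert, Finset.mem_singleton] at hc
      push_neg at hc
      have hcp : (c : ℕ) ≠ (p : ℕ) := fun h => hc.1 (Fin.ext h)
      have hcq : (c : ℕ) ≠ (q : ℕ) := fun h => hc.2 (Fin.ext h)
      rcases lt_or_gt_of_ne hcp with h | h
      · rw [htri p c h, zero_mul]
      · rw [htri' c q (by omega), mul_zero]
    rw [← Finset.sum_subset (Finset.subset_univ ({p, q} : Finset (Fin n))) hvanish,
      Finset.sum_pair hpqne]
  have hqqne : M q q ≠ 0 := left_ne_zero_of_mul_eq_one hqq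
  have hppne : M p p ≠ 0 := left_ne_zero_of_mul_eq_one hpp
  refine ⟨M p q * (M q q)⁻¹, ?_⟩
  apply Set.eq_of_subset_of_subset
  · rintro w ⟨v, ⟨hv1, hv2⟩, rfl⟩
    show M *ᵥ v ∈ Vswap F p q (M p q * (M q q)⁻¹)
    have wq : (M *ᵥ v) q = M q q * v q := by
      show ∑ b, M q b * v b = _
      rw [Fintype.sum_eq_single q]
      intro b hb
      rcases lt_or_gt_of_ne (fun h : (b:ℕ) = (q:ℕ) => hb (Fin.ext h)) with h | h
      · rcases lt_trichotomy (b : ℕ) (p : ℕ) with h' | h' | h'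
        · rw [htri q b (by omega), zero_mul]
        · have : b = p := Fin.ext h'
          subst this; rw [hv1, mul_zero]
        · omega
      · rw [hv2 b h, mul_zero]
    have wp : (M *ᵥ v) p = M p q * v q := by
      show ∑ b, M p b * v b = _
      rw [Fintype.sum_eq_single q]
      intro b hb
      rcases lt_or_gt_of_ne (fun h : (b:ℕ) = (q:ℕ) => hb (Fin.ext h)) with h | h
      · rcases lt_trichotomy (b : ℕ) (p : ℕ) with h' | h' | h'
        · rw [htri p b h', zero_mul]
        · have : b = p := Fin.ext h'
          subst this; rw [hv1, mul_zero]
        · omega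
      · rw [hv2 b h, mul_zero]
    constructor
    · rw [wp, wq]
      field_simp
    · intro x hx
      show ∑ b, M x b * v b = 0
      apply Finset.sum_eq_zero
      intro b _
      by_cases hb : (q : ℕ) < (b : ℕ)
      · rw [hv2 b hb, mul_zero]
      · rw [htri x b (by omega), zero_mul]
  · intro v ⟨hv1, hv2⟩
    refine ⟨M' *ᵥ v, ⟨?_, ?_⟩, ?_⟩
    · show ∑ b, M' p b * v b = 0
      have hvanish : ∀ c ∈ (Finset.univ : Finset (Fin n)), c ∉ ({p, q} : Finset (Fin n)) →
          M' p c * v c = 0 := by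
        intro c _ hc
        simp only [Finset.mem_insert, Finset.mem_singleton] at hc
        push_neg at hc
        have hcp : (c : ℕ) ≠ (p : ℕ) := fun h => hc.1 (Fin.ext h)
        have hcq : (c : ℕ) ≠ (q : ℕ) := fun h => hc.2 (Fin.ext h)
        rcases lt_or_gt_of_ne hcp with h | h
        · rw [htri' p c h, zero_mul]
        · rw [hv2 c (by omega), mul_zero]
      rw [← Finset.sum_subset (Finset.subset_univ ({p, q} : Finset (Fin n))) hvanish,
        Finset.sum_pair hpqne, hv1]
      -- M' p p * (M p q * (M q q)⁻¹ * v q) + M' p q * v q = 0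
      have hMpp : M' p p = (M p p)⁻¹ := eq_inv_of_mul_eq_one_right hpp
      have hMqq : M' q q = (M q q)⁻¹ := eq_inv_of_mul_eq_one_right hqq
      have hMpq1 : M p p * M' p q = -(M p q * (M q q)⁻¹) := by
        rw [hMqq] at hpq0
        linear_combination hpq0
      have hMpq : M' p q = -(M p q * (M q q)⁻¹) / M p p := by
        rw [eq_div_iff hppne]
        linear_combination hMpq1
      rw [hMpp, hMpq]
      field_simp
      ring
    · intro x hx
      show ∑ b, M' x b * v b = 0
      apply Finset.sum_eq_zero
      intro b _
      by_cases hb : (q : ℕ) < (b : ℕ)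
      · rw [hv2 b hb, mul_zero]
      · rw [htri' x b (by omega), zero_mul]
    · show M *ᵥ (M' *ᵥ v) = v
      rw [Matrix.mulVec_mulVec, hprod, Matrix.one_mulVec]

end upperbound

-- ===== inversion count combinatorics =====
section combinatorics

lemma swap_ord {x y : Fin n} (hxy : (x : ℕ) + 1 = (y : ℕ)) :
    ∀ a b : Fin n, a < b → (a, b) ≠ (x, y) → Equiv.swap x y a < Equiv.swap x y b := by
  intro a b hab hne
  have hab' : (a : ℕ) < (b : ℕ) := Fin.lt_def.mp hab
  rw [Fin.lt_def]
  by_cases hax : a = x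
  · subst hax
    have hby : b ≠ y := fun h => hne (by rw [h])
    have hbx : b ≠ a := fun h => (by rw [h] at hab'; omega : False)
    rw [Equiv.swap_apply_left, Equiv.swap_apply_of_ne_of_ne (Ne.symm (fun h => hbx h.symm))
      hby]
    have : (b : ℕ) ≠ (y : ℕ) := fun h => hby (Fin.ext h)
    omega
  · by_cases hay : a = y
    · subst hay
      have hbx : b ≠ x := fun h => by rw [h] at hab'; omega
      have hby : b ≠ a := fun h => by rw [h] at hab'; omega
      rw [Equiv.swap_apply_right, Equiv.swap_apply_of_ne_of_ne hbx (fun h => hby h)]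
      omega
    · have hax' : (a : ℕ) ≠ (x : ℕ) := fun h => hax (Fin.ext h)
      have hay' : (a : ℕ) ≠ (y : ℕ) := fun h => hay (Fin.ext h)
      rw [Equiv.swap_apply_of_ne_of_ne hax hay]
      by_cases hbx : b = x
      · subst hbx
        rw [Equiv.swap_apply_left]
        omega
      · by_cases hby : b = y
        · subst hby
          rw [Equiv.swap_apply_right]
          omega
        · have hbx' : (b : ℕ) ≠ (x : ℕ) := fun h => hbx (Fin.ext h)
          rw [Equiv.swap_apply_of_ne_of_ne hbx hby]
          omega

lemma invCount_mul_swap {e : Equiv.Perm (Fin n)} {x y : Fin n} (hxy : (x : ℕ) + 1 = (y : ℕ))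
    (hd : e y < e x) : invCount n (e * Equiv.swap x y) + 1 = invCount n e := by
  classical
  set s := Equiv.swap x y with hs
  have hxyne : x ≠ y := fun h => by rw [h] at hxy; omega
  have hxylt : x < y := Fin.lt_def.mpr (by omega)
  set A := Finset.univ.filter (fun p : Fin n × Fin n => p.1 < p.2 ∧ e p.2 < e p.1) with hA
  have hmem : (x, y) ∈ A := by
    rw [hA, Finset.mem_filter]
    exact ⟨Finset.mem_univ _, hxylt, hd⟩
  have key : Finset.univ.filter
      (fun p : Fin n × Fin n => p.1 < p.2 ∧ (e * s) p.2 < (e * s) p.1)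
      = (A.erase (x, y)).image (fun p => (s p.1, s p.2)) := by
    ext ⟨a, b⟩
    rw [Finset.mem_filter, Finset.mem_image]
    simp only [Finset.mem_univ, true_and, Equiv.Perm.mul_apply]
    constructor
    · rintro ⟨hab, hlt⟩
      have hne' : (a, b) ≠ (x, y) := by
        intro h
        have ha : a = x := congrArg Prod.fst h
        have hb : b = y := congrArg Prod.snd h
        subst ha; subst hb
        rw [hs, Equiv.swap_apply_left, Equiv.swap_apply_right] at hlt
        exact absurd hlt (asymm hd)
      refine ⟨(s a, s b), Finset.mem_erase.mpr ⟨?_, Finset.mem_filter.mpr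
        ⟨Finset.mem_univ _, ?_, ?_⟩⟩, ?_⟩
      · intro h
        have ha : s a = x := congrArg Prod.fst h
        have hb : s b = y := congrArg Prod.snd h
        have ha' : a = y := by
          have := congrArg s ha
          rwa [hs, Equiv.swap_apply_self, Equiv.swap_apply_left] at this
        have hb' : b = x := by
          have := congrArg s hb
          rwa [hs, Equiv.swap_apply_self, Equiv.swap_apply_right] at this
        subst ha'; subst hb'
        exact absurd hab (asymm hxylt)
      · exact swap_ord hxy a b hab hne'
      · exact hlt
      · rw [hs]
        simp [Equiv.swap_apply_self]
    · rintro ⟨⟨c, d⟩, hcd', heq⟩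
      rw [Finset.mem_erase, Finset.mem_filter] at hcd'
      obtain ⟨hne, -, hcd, hinv⟩ := hcd'
      have ha : a = s c := (congrArg Prod.fst heq).symm
      have hb : b = s d := (congrArg Prod.snd heq).symm
      subst ha; subst hb
      constructor
      · exact swap_ord hxy c d hcd hne
      · rw [hs, Equiv.swap_apply_self, Equiv.swap_apply_self]
        exact hinv
  have hinj : Function.Injective (fun p : Fin n × Fin n => (s p.1, s p.2)) := by
    intro p r h
    have h1 : s p.1 = s r.1 := congrArg Prod.fst h
    have h2 : s p.2 = s r.2 := congrArg Prod.snd h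
    exact Prod.ext (s.injective h1) (s.injective h2)
  have hcard : invCount n (e * s) = (A.erase (x, y)).card := by
    rw [invCount, key, Finset.card_image_of_injective _ hinj]
  rw [hcard, Finset.card_erase_of_mem hmem]
  have hpos : 0 < A.card := Finset.card_pos.mpr ⟨(x, y), hmem⟩
  show A.card - 1 + 1 = invCount n e
  rw [invCount, ← hA]
  omega

lemma strictmono_le {e : Equiv.Perm (Fin n)} (hmono : ∀ a b : Fin n, a < b → e a < e b) :
    ∀ (m : ℕ) (hm : m < n), m ≤ ((e ⟨m, hm⟩ : Fin n) : ℕ) := by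
  intro m
  induction m with
  | zero => intro hm; exact Nat.zero_le _
  | succ d ih =>
    intro hm
    have hd : d < n := by omega
    have h1 := ih hd
    have h2 : e ⟨d, hd⟩ < e ⟨d + 1, hm⟩ := hmono _ _ (Fin.lt_def.mpr (by simp))
    have := Fin.lt_def.mp h2
    omega

lemma perm_eq_one_of_invCount_zero {e : Equiv.Perm (Fin n)} (h : invCount n e = 0) :
    e = 1 := by
  classical
  have hempty := Finset.card_eq_zero.mp h
  have hnoinv : ∀ a b : Fin n, a < b → ¬(e b < e a) := by
    intro a b hab hlt
    have : (a, b) ∈ Finset.univ.filter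
        (fun p : Fin n × Fin n => p.1 < p.2 ∧ e p.2 < e p.1) := by
      rw [Finset.mem_filter]; exact ⟨Finset.mem_univ _, hab, hlt⟩
    rw [hempty] at this
    exact absurd this (Finset.notMem_empty _)
  have hmono : ∀ a b : Fin n, a < b → e a < e b := by
    intro a b hab
    rcases lt_trichotomy (e a) (e b) with h' | h' | h'
    · exact h'
    · exact absurd (e.injective h') (ne_of_lt hab)
    · exact absurd h' (hnoinv a b hab)
  have hmono' : ∀ a b : Fin n, a < b → e⁻¹ a < e⁻¹ b := by
    intro a b hab
    rcases lt_trichotomy (e⁻¹ a) (e⁻¹ b) with h' | h' | h'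
    · exact h'
    · exact absurd (e⁻¹.injective h') (ne_of_lt hab)
    · have := hmono _ _ h'
      rw [show ∀ x, e (e⁻¹ x) = x from fun x => e.apply_symm_apply x,
        show ∀ x, e (e⁻¹ x) = x from fun x => e.apply_symm_apply x] at this
      exact absurd hab (asymm this)
  have h1 := strictmono_le hmono
  have h2 := strictmono_le hmono'
  apply Equiv.ext
  intro a
  have ha1 : (a : ℕ) ≤ (e a : ℕ) := by
    have := h1 (a : ℕ) a.isLt
    simpa using this
  have ha2 : ((e a : Fin n) : ℕ) ≤ (a : ℕ) := by
    have := h2 ((e a : Fin n) : ℕ) (e a).isLt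
    simp only [Fin.eta] at this
    rw [show e⁻¹ (e a) = a from e.symm_apply_apply a] at this
    exact this
  show e a = a
  exact Fin.ext (le_antisymm ha2 ha1)

lemma mono_of_adj (e : Equiv.Perm (Fin n)) (Q : ℕ → Prop)
    (hadj : ∀ (k : ℕ) (hk0 : 0 < k) (hkn : k < n), Q k →
      e ⟨k - 1, by omega⟩ < e ⟨k, hkn⟩) :
    ∀ (d : ℕ) (a b : Fin n), (b : ℕ) = (a : ℕ) + d + 1 →
      (∀ k, (a : ℕ) < k → k ≤ (b : ℕ) → Q k) → e a < e b := by
  intro d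
  induction d with
  | zero =>
    intro a b hba hQ
    have h := hadj (b : ℕ) (by omega) b.isLt (hQ (b : ℕ) (by omega) le_rfl)
    have e1 : (⟨(b : ℕ) - 1, by omega⟩ : Fin n) = a := Fin.ext (by simp; omega)
    have e2 : (⟨(b : ℕ), b.isLt⟩ : Fin n) = b := Fin.ext rfl
    rwa [e1, e2] at h
  | succ d ih =>
    intro a b hba hQ
    have hmidlt : (a : ℕ) + d + 1 < n := by
      have := b.isLt; omega
    set mid : Fin n := ⟨(a : ℕ) + d + 1, hmidlt⟩ with hmid
    have hmidval : (mid : ℕ) = (a : ℕ) + d + 1 := rfl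
    have hstep1 : e a < e mid :=
      ih a mid hmidval (fun k h1 h2 => hQ k h1 (by rw [hmidval] at h2; omega))
    have h := hadj (b : ℕ) (by omega) b.isLt (hQ (b : ℕ) (by omega) le_rfl)
    have e1 : (⟨(b : ℕ) - 1, by omega⟩ : Fin n) = mid := Fin.ext (by simp; omega)
    have e2 : (⟨(b : ℕ), b.isLt⟩ : Fin n) = b := Fin.ext rfl
    rw [e1, e2] at h
    exact lt_trans hstep1 h

end combinatorics

lemma min_mono_of_swap (e : Equiv.Perm (Fin n)) (Q : ℕ → Prop)
    (hswap : ∀ (k : ℕ) (hk0 : 0 < k) (hkn : k < n), Q k →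
      invCount n e ≤ invCount n (e * Equiv.swap ⟨k - 1, by omega⟩ ⟨k, hkn⟩)) :
    ∀ a b : Fin n, a < b → (∀ k, (a : ℕ) < k → k ≤ (b : ℕ) → Q k) → e a < e b := by
  intro a b hab hQ
  have hd : (b : ℕ) = (a : ℕ) + ((b : ℕ) - (a : ℕ) - 1) + 1 := by
    have := Fin.lt_def.mp hab; omega
  apply mono_of_adj e Q ?_ _ a b hd hQ
  intro k hk0 hkn hQk
  by_contra hlt
  push_neg at hlt
  have hne : e ⟨k, hkn⟩ ≠ e ⟨k - 1, by omega⟩ := by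
    intro hh
    have h2 := e.injective hh
    have h3 : ((⟨k, hkn⟩ : Fin n) : ℕ) = ((⟨k - 1, by omega⟩ : Fin n) : ℕ) := congrArg Fin.val h2
    have h4 : k = k - 1 := h3
    omega
  have hdesc : e ⟨k, hkn⟩ < e ⟨k - 1, by omega⟩ := lt_of_le_of_ne hlt hne
  have hcount := invCount_mul_swap
    (x := (⟨k - 1, by omega⟩ : Fin n)) (y := (⟨k, hkn⟩ : Fin n))
    (show k - 1 + 1 = k by omega) hdesc
  have hle := hswap k hk0 hkn hQk
  omega
set_option maxHeartbeats 3000000 in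
/-- **Corollary 4.4 for `GL_n` over a finite field:** with `w = u z v` (`u ∈ W^j`,
`z ∈ (W_j)^{i,j}`, `v ∈ W_{i,j}`), every line of the Schubert incidence structure `(X_w)_{ij}`
is incident to at most two points if and only if `z = 1` when `q > 2`, and `z ∈ {1, s_i}`
when `q = 2`. -/
theorem schubert_incidence_thin_iff (q : ℕ) (hq : IsPrimePow q)
    (F : Type*) [Field F] [Fintype F] (hF : Fintype.card F = q)
    (n : ℕ) (hn : 2 ≤ n)
    (i j : ℕ) (hi1 : 1 ≤ i) (hi2 : i ≤ n - 1) (hj1 : 1 ≤ j) (hj2 : j ≤ n - 1) (hij : i ≠ j)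
    (w u z v : Equiv.Perm (Fin n))
    (hu : u ∈ minReps n j) (hz : z ∈ minRepsIn n i j) (hv : v ∈ Wfix n i ∩ Wfix n j)
    (hw : w = u * z * v) :
    (∀ h ∈ doubleCoset F n w,
        Set.ncard {x : GL (Fin n) F ⧸ Pmax F n i | ∃ k ∈ doubleCoset F n w,
          QuotientGroup.mk k = x ∧
            (QuotientGroup.mk k : GL (Fin n) F ⧸ Pmax F n j) = QuotientGroup.mk h} ≤ 2) ↔
      ((2 < q → z = 1) ∧ (q = 2 → z = 1 ∨ z = sT n i)) := by
  classical
  have hilt : i < n := by omega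
  have hjlt : j < n := by omega
  have hq2 : 2 ≤ q := hq.two_le
  haveI hfinGL : Finite (GL (Fin n) F) := Finite.of_injective
    (fun g : GL (Fin n) F => ((g : Matrix (Fin n) (Fin n) F),
      ((g⁻¹ : GL (Fin n) F) : Matrix (Fin n) (Fin n) F)))
    (fun a b hab => Units.ext (congrArg Prod.fst hab))
  -- strict monotonicity of u on the j-blocks
  have humono : ∀ a b : Fin n, a < b → (((a : ℕ) < j) ↔ ((b : ℕ) < j)) → u a < u b := by
    intro a b hab hblk
    refine min_mono_of_swap u (fun k => k ≠ j) ?_ a b hab ?_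
    · intro k hk0 hkn hkj
      refine hu _ (swap_mem_Wfix ?_)
      show k - 1 < j ↔ k < j
      omega
    · intro k h1 h2
      intro hkj
      by_cases haj : (a : ℕ) < j
      · have := hblk.mp haj; omega
      · omega
  have hzW : z ∈ Wfix n j := hz.1
  have hzmono : ∀ a b : Fin n, a < b → (((a : ℕ) < i) ↔ ((b : ℕ) < i)) →
      (((a : ℕ) < j) ↔ ((b : ℕ) < j)) → z a < z b := by
    intro a b hab hblki hblkj
    refine min_mono_of_swap z (fun k => k ≠ i ∧ k ≠ j) ?_ a b hab ?_
    · intro k hk0 hkn hk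
      refine hz.2 _ ⟨swap_mem_Wfix ?_, swap_mem_Wfix ?_⟩
      · show k - 1 < i ↔ k < i
        omega
      · show k - 1 < j ↔ k < j
        omega
    · intro k h1 h2
      constructor
      · intro hki
        by_cases hai : (a : ℕ) < i
        · have := hblki.mp hai; omega
        · omega
      · intro hkj
        by_cases haj : (a : ℕ) < j
        · have := hblkj.mp haj; omega
        · omega
  -- structure of inversions of z
  have hzstruct : ∀ c d : Fin n, c < d → z d < z c →
      (c : ℕ) < i ∧ i ≤ (d : ℕ) ∧ (((c : ℕ) < j) ↔ ((d : ℕ) < j)) := by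
    intro c d hcd hdc
    have hcd' := Fin.lt_def.mp hcd
    have hblkj : ((c : ℕ) < j) ↔ ((d : ℕ) < j) := by
      constructor
      · intro hcj
        by_contra hdj
        have h1 := wfix_lt hzW hcj
        have h2 := wfix_ge hzW (show j ≤ (d : ℕ) by omega)
        have := Fin.lt_def.mp hdc
        omega
      · intro; by_contra hcj
        have h1 := wfix_ge hzW (show j ≤ (c : ℕ) by omega)
        have h2 := wfix_lt hzW (by assumption : (d : ℕ) < j)
        have := Fin.lt_def.mp hdc
        omega
    refine ⟨?_, ?_, hblkj⟩ <;> by_contra hcon <;> push_neg at hcon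
    · have hblki : ((c : ℕ) < i) ↔ ((d : ℕ) < i) := by omega
      exact absurd (hzmono c d hcd hblki hblkj) (asymm hdc)
    · have hblki : ((c : ℕ) < i) ↔ ((d : ℕ) < i) := by omega
      exact absurd (hzmono c d hcd hblki hblkj) (asymm hdc)
  have hwperm : permGL F n w = permGL F n u * permGL F n z * permGL F n v := by
    rw [hw, permGL_mul, permGL_mul]
  have hzPj : permGL F n z ∈ Pmax F n j := permGL_mem_Pmax hzW
  have hvPj : permGL F n v ∈ Pmax F n j := permGL_mem_Pmax hv.2
  have hvPi : permGL F n v ∈ Pmax F n i := permGL_mem_Pmax hv.1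
  -- triangularity of elements of Γ
  have hGamTri : ∀ m : GL (Fin n) F, m ∈ Pmax F n j →
      permGL F n u * m * (permGL F n u)⁻¹ ∈ Bsub F n →
      ∀ a b : Fin n, (b : ℕ) < (a : ℕ) → (m : Matrix (Fin n) (Fin n) F) a b = 0 := by
    intro m hmP hmB a b hba
    by_cases hblk : ((a : ℕ) < j) ↔ ((b : ℕ) < j)
    · have hu' : u b < u a := humono b a (Fin.lt_def.mpr hba) hblk.symm
      have hB := mem_Bsub_iff_s8.mp hmB (u a) (u b) (Fin.lt_def.mp hu')
      rw [conj_permGL_apply] at hB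
      simpa using hB
    · have hPcase : (b : ℕ) < j ∧ j ≤ (a : ℕ) := by
        by_cases haj : (a : ℕ) < j
        · by_cases hbj : (b : ℕ) < j
          · exact absurd (by omega : ((a : ℕ) < j) ↔ ((b : ℕ) < j)) hblk
          · omega
        · by_cases hbj : (b : ℕ) < j
          · omega
          · exact absurd (by omega : ((a : ℕ) < j) ↔ ((b : ℕ) < j)) hblk
      exact mem_Pmax_iff.mp hmP a b hPcase.1 hPcase.2
  constructor
  · -- forward direction
    intro hthin
    by_contra hR
    rw [not_and_or] at hR
    have hzne1 : z ≠ 1 := by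
      rcases hR with h | h
      · push_neg at h; exact h.2
      · push_neg at h; exact h.2.1
    -- an inversion of z exists
    have hAzdef : invCount n z
        = (Finset.univ.filter (fun p : Fin n × Fin n => p.1 < p.2 ∧ z p.2 < z p.1)).card := rfl
    have hinvne : invCount n z ≠ 0 := fun h0 => hzne1 (perm_eq_one_of_invCount_zero h0)
    -- the key construction of incident points
    have hKey : ∀ (c d : Fin n), c < d → z d < z c → ∀ t : F,
        ∃ K : GL (Fin n) F, K ∈ doubleCoset F n w ∧
          (QuotientGroup.mk K : GL (Fin n) F ⧸ Pmax F n j) = QuotientGroup.mk (permGL F n w) ∧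
          actGL K (colset F n i) = actGL (permGL F n u) (Vinv F z i (z d) (z c) t) := by
      intro c d hcd hdc t
      have hstr := hzstruct c d hcd hdc
      have hadne : z d ≠ z c := ne_of_lt hdc
      have hblk_ab : (((z d : Fin n) : ℕ) < j ↔ ((z c : Fin n) : ℕ) < j) := by
        have h1 := wfix_iff hzW d
        have h2 := wfix_iff hzW c
        have h3 := hstr.2.2
        tauto
      have huab : u (z d) < u (z c) := humono (z d) (z c) hdc hblk_ab
      have ha : i ≤ ((z⁻¹ (z d) : Fin n) : ℕ) := by
        simpa using hstr.2.1
      set m : GL (Fin n) F := elemGL F n (z d) (z c) hadne t with hm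
      have hmPj : m ∈ Pmax F n j := by
        rw [mem_Pmax_iff]
        intro x y hy hx
        rw [hm, elemGL_val_apply]
        rw [if_neg (fun hxy : x = y => by rw [hxy] at hx; omega),
          if_neg, add_zero]
        rintro ⟨rfl, rfl⟩
        omega
      have hmB : permGL F n u * m * (permGL F n u)⁻¹ ∈ Bsub F n := by
        rw [mem_Bsub_iff_s8]
        intro x y hxy
        rw [conj_permGL_apply, hm, elemGL_val_apply]
        rw [if_neg (fun hc : u⁻¹ x = u⁻¹ y => by
          rw [u⁻¹.injective hc] at hxy; omega), if_neg, add_zero]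
        rintro ⟨hc1, hc2⟩
        have hx : x = u (z d) := by rw [← hc1]; simp
        have hy : y = u (z c) := by rw [← hc2]; simp
        rw [hx, hy] at hxy
        have := Fin.lt_def.mp huab
        omega
      refine ⟨permGL F n u * m * (permGL F n z * permGL F n v), ?_, ?_, ?_⟩
      · refine ⟨permGL F n u * m * (permGL F n u)⁻¹, hmB, 1, one_mem _, ?_⟩
        rw [hwperm]; group
      · rw [QuotientGroup.eq]
        have hid : (permGL F n u * m * (permGL F n z * permGL F n v))⁻¹ * permGL F n w
            = (permGL F n z * permGL F n v)⁻¹ * m⁻¹ * (permGL F n z * permGL F n v) := by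
          rw [hwperm]; group
        rw [hid]
        exact mul_mem (mul_mem (inv_mem (mul_mem hzPj hvPj)) (inv_mem hmPj))
          (mul_mem hzPj hvPj)
      · rw [actGL_mul (permGL F n u * m) (permGL F n z * permGL F n v),
          actGL_mul (permGL F n u) m,
          actGL_mul (permGL F n z) (permGL F n v),
          mem_Pmax_iff_actGL.mp hvPi, actGL_permGL_colset,
          actGL_elemGL_zcolSet hadne ha t]
    -- inequality of resulting points
    have hptne : ∀ (Ka Kb : GL (Fin n) F) (Sa Sb : Set (Fin n → F)),
        actGL Ka (colset F n i) = actGL (permGL F n u) Sa →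
        actGL Kb (colset F n i) = actGL (permGL F n u) Sb →
        Sa ≠ Sb →
        (QuotientGroup.mk Ka : GL (Fin n) F ⧸ Pmax F n i) ≠ QuotientGroup.mk Kb := by
      intro Ka Kb Sa Sb hSa hSb hSne heq
      apply hSne
      apply actGL_cancel (g := permGL F n u)
      rw [← hSa, ← hSb]
      exact mk_eq_mk_iff_actGL.mp heq
    have hha : ∀ (c d : Fin n), c < d → z d < z c → i ≤ ((z⁻¹ (z d) : Fin n) : ℕ) := by
      intro c d hcd hdc
      simpa using (hzstruct c d hcd hdc).2.1
    have hhb : ∀ (c d : Fin n), c < d → z d < z c → ((z⁻¹ (z c) : Fin n) : ℕ) < i := by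
      intro c d hcd hdc
      simpa using (hzstruct c d hcd hdc).1
    have hwdc : permGL F n w ∈ doubleCoset F n w :=
      ⟨1, one_mem _, 1, one_mem _, by rw [one_mul, mul_one]⟩
    have hthinW := hthin (permGL F n w) hwdc
    rw [← not_lt] at hthinW
    apply hthinW
    rw [Set.two_lt_ncard_iff (Set.toFinite _)]
    -- now two scenarios
    obtain ⟨⟨c, d⟩, hmemAz⟩ : (Finset.univ.filter
        (fun p : Fin n × Fin n => p.1 < p.2 ∧ z p.2 < z p.1)).Nonempty :=
      Finset.card_pos.mp (by rw [← hAzdef]; exact Nat.pos_of_ne_zero hinvne)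
    have hcd : c < d := (Finset.mem_filter.mp hmemAz).2.1
    have hdc : z d < z c := (Finset.mem_filter.mp hmemAz).2.2
    rcases hR with hR1 | hR2
    · -- q > 2
      push_neg at hR1
      have hF3 : 3 ≤ Fintype.card F := by rw [hF]; omega
      obtain ⟨t2, ht20, ht21⟩ := field_card_three hF3
      obtain ⟨K0, hK0dc, hK0j, hK0act⟩ := hKey c d hcd hdc 0
      obtain ⟨K1, hK1dc, hK1j, hK1act⟩ := hKey c d hcd hdc 1
      obtain ⟨K2, hK2dc, hK2j, hK2act⟩ := hKey c d hcd hdc t2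
      refine ⟨QuotientGroup.mk K0, QuotientGroup.mk K1, QuotientGroup.mk K2,
        ⟨K0, hK0dc, rfl, hK0j⟩, ⟨K1, hK1dc, rfl, hK1j⟩, ⟨K2, hK2dc, rfl, hK2j⟩, ?_, ?_, ?_⟩
      · exact hptne K0 K1 _ _ hK0act hK1act
          (Vinv_ne_of_t_ne (hha c d hcd hdc) (hhb c d hcd hdc) zero_ne_one)
      · exact hptne K0 K2 _ _ hK0act hK2act
          (Vinv_ne_of_t_ne (hha c d hcd hdc) (hhb c d hcd hdc) (Ne.symm ht20))
      · exact hptne K1 K2 _ _ hK1act hK2act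
          (Vinv_ne_of_t_ne (hha c d hcd hdc) (hhb c d hcd hdc) (Ne.symm ht21))
    · -- q = 2
      push_neg at hR2
      obtain ⟨hq2', hzz1, hzzsi⟩ := hR2
      -- there are two distinct inversions
      have hcard2' : 1 < (Finset.univ.filter
          (fun p : Fin n × Fin n => p.1 < p.2 ∧ z p.2 < z p.1)).card := by
        by_contra hle1
        push_neg at hle1
        have hc1 : (Finset.univ.filter
            (fun p : Fin n × Fin n => p.1 < p.2 ∧ z p.2 < z p.1)).card = 1 := by
          have h0 : (Finset.univ.filter
              (fun p : Fin n × Fin n => p.1 < p.2 ∧ z p.2 < z p.1)).card ≠ 0 := by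
            rw [← hAzdef]; exact hinvne
          omega
        obtain ⟨pr, hpr⟩ := Finset.card_eq_one.mp hc1
        have huniq : ∀ c' d' : Fin n, c' < d' → z d' < z c' → (c', d') = (c, d) := by
          intro c' d' h1 h2
          have hmem' : (c', d') ∈ Finset.univ.filter
              (fun p : Fin n × Fin n => p.1 < p.2 ∧ z p.2 < z p.1) := by
            rw [Finset.mem_filter]; exact ⟨Finset.mem_univ _, h1, h2⟩
          rw [hpr, Finset.mem_singleton] at hmem' hmemAz
          rw [hmem', ← hmemAz]
        have hstr := hzstruct c d hcd hdc
        have hcd' := Fin.lt_def.mp hcd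
        have hd1 : (d : ℕ) = (c : ℕ) + 1 := by
          by_contra hne
          have hmidlt : (c : ℕ) + 1 < n := by have := d.isLt; omega
          set mid : Fin n := ⟨(c : ℕ) + 1, hmidlt⟩ with hmiddef
          have hcm : c < mid := Fin.lt_def.mpr (show (c : ℕ) < (c : ℕ) + 1 by omega)
          have hmd : mid < d := Fin.lt_def.mpr (show (c : ℕ) + 1 < (d : ℕ) by omega)
          rcases lt_or_ge (z mid) (z c) with hlt | hle'
          · have heq2 := huniq c mid hcm hlt
            have : mid = d := (Prod.ext_iff.mp heq2).2
            have : (mid : ℕ) = (d : ℕ) := congrArg Fin.val this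
            have hmv : (mid : ℕ) = (c : ℕ) + 1 := rfl
            omega
          · have hzmd : z d < z mid := lt_of_lt_of_le hdc hle'
            have heq2 := huniq mid d hmd hzmd
            have : mid = c := (Prod.ext_iff.mp heq2).1
            have : (mid : ℕ) = (c : ℕ) := congrArg Fin.val this
            have hmv : (mid : ℕ) = (c : ℕ) + 1 := rfl
            omega
        have hswapcount := invCount_mul_swap (x := c) (y := d) (by omega) hdc
        have hone : invCount n z = 1 := by rw [hAzdef]; exact hc1
        have hzero : invCount n (z * Equiv.swap c d) = 0 := by omega
        have hid1 : z * Equiv.swap c d = 1 := perm_eq_one_of_invCount_zero hzero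
        have hzsw : z = Equiv.swap c d := by
          have h := eq_inv_of_mul_eq_one_left hid1
          rwa [Equiv.swap_inv] at h
        apply hzzsi
        have hcval : (c : ℕ) = i - 1 := by
          have h1 := hstr.1
          have h2 := hstr.2.1
          omega
        rw [hzsw, sT, dif_pos (⟨by omega, by omega⟩ : 0 < i ∧ i < n)]
        have hc_eq : c = (⟨i - 1, by omega⟩ : Fin n) := Fin.ext (show (c : ℕ) = i - 1 by omega)
        have hd_eq : d = (⟨i, by omega⟩ : Fin n) :=
          Fin.ext (show (d : ℕ) = i by omega)
        exact congrArg₂ Equiv.swap hc_eq hd_eq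
      -- obtain two distinct inversion pairs
      rw [Finset.one_lt_card] at hcard2'
      obtain ⟨pr1, hp1, pr2, hp2, hpne⟩ := hcard2'
      obtain ⟨c1, d1⟩ := pr1
      obtain ⟨c2, d2⟩ := pr2
      rw [Finset.mem_filter] at hp1 hp2
      have hcd1 : c1 < d1 := hp1.2.1
      have hdc1 : z d1 < z c1 := hp1.2.2
      have hcd2 : c2 < d2 := hp2.2.1
      have hdc2 : z d2 < z c2 := hp2.2.2
      obtain ⟨K0, hK0dc, hK0j, hK0act⟩ := hKey c1 d1 hcd1 hdc1 0
      obtain ⟨K1, hK1dc, hK1j, hK1act⟩ := hKey c1 d1 hcd1 hdc1 1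
      obtain ⟨K2, hK2dc, hK2j, hK2act⟩ := hKey c2 d2 hcd2 hdc2 1
      have hpairne : ((z d1 : Fin n), (z c1 : Fin n)) ≠ ((z d2 : Fin n), (z c2 : Fin n)) := by
        intro hpe
        apply hpne
        have h1 : d1 = d2 := z.injective (Prod.ext_iff.mp hpe).1
        have h2 : c1 = c2 := z.injective (Prod.ext_iff.mp hpe).2
        rw [h1, h2]
      refine ⟨QuotientGroup.mk K0, QuotientGroup.mk K1, QuotientGroup.mk K2,
        ⟨K0, hK0dc, rfl, hK0j⟩, ⟨K1, hK1dc, rfl, hK1j⟩, ⟨K2, hK2dc, rfl, hK2j⟩, ?_, ?_, ?_⟩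
      · exact hptne K0 K1 _ _ hK0act hK1act
          (Vinv_ne_of_t_ne (hha c1 d1 hcd1 hdc1) (hhb c1 d1 hcd1 hdc1) zero_ne_one)
      · have hset : Vinv F z i (z d1) (z c1) 0 = Vinv F z i (z d2) (z c2) 0 := by
          rw [Vinv_zero (hha c1 d1 hcd1 hdc1), Vinv_zero (hha c2 d2 hcd2 hdc2)]
        exact hptne K0 K2 _ _ (hK0act.trans (congrArg (actGL (permGL F n u)) hset)) hK2act
          (Vinv_ne_of_t_ne (hha c2 d2 hcd2 hdc2) (hhb c2 d2 hcd2 hdc2) zero_ne_one)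
      · exact hptne K1 K2 _ _ hK1act hK2act
          (Vinv_ne_of_pair_ne (hha c1 d1 hcd1 hdc1) (hhb c1 d1 hcd1 hdc1)
            (hha c2 d2 hcd2 hdc2) (hhb c2 d2 hcd2 hdc2) hpairne)
  · -- backward direction
    rintro ⟨hqgt, hqeq⟩ h hh
    obtain ⟨b1, hb1, b2, hb2, rfl⟩ := hh
    rw [← not_lt]
    intro h3
    rw [Set.two_lt_ncard_iff (Set.toFinite _)] at h3
    obtain ⟨x1, x2, x3, hx1, hx2, hx3, h12, h13, h23⟩ := h3
    have hdec : ∀ x : GL (Fin n) F ⧸ Pmax F n i,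
        (∃ k ∈ doubleCoset F n w, QuotientGroup.mk k = x ∧
          (QuotientGroup.mk k : GL (Fin n) F ⧸ Pmax F n j) =
            QuotientGroup.mk (b1 * permGL F n w * b2)) →
        ∃ (mm : GL (Fin n) F) (k : GL (Fin n) F), mm ∈ Pmax F n j ∧
          permGL F n u * mm * (permGL F n u)⁻¹ ∈ Bsub F n ∧
          QuotientGroup.mk k = x ∧
          actGL k (colset F n i) =
            actGL (b1 * permGL F n u) (actGL mm (zcolSet F z i)) := by
      rintro x ⟨k, ⟨β1, hβ1, β2, hβ2, rfl⟩, hmkx, hmkj⟩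
      set g0 : GL (Fin n) F := b1⁻¹ * β1 with hg0
      set mm : GL (Fin n) F := (permGL F n u)⁻¹ * g0 * permGL F n u with hmm
      have hconj : permGL F n u * mm * (permGL F n u)⁻¹ = g0 := by
        rw [hmm]; group
      have hP0 : (β1 * permGL F n w * β2)⁻¹ * (b1 * permGL F n w * b2) ∈ Pmax F n j :=
        QuotientGroup.eq.mp hmkj
      have hMw : (permGL F n w)⁻¹ * g0⁻¹ * permGL F n w
          = β2 * ((β1 * permGL F n w * β2)⁻¹ * (b1 * permGL F n w * b2)) * b2⁻¹ := by
        rw [hg0]; group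
      have hP1 : (permGL F n w)⁻¹ * g0⁻¹ * permGL F n w ∈ Pmax F n j := by
        rw [hMw]
        exact mul_mem (mul_mem (Bsub_le_Pmax hβ2) hP0) (inv_mem (Bsub_le_Pmax hb2))
      have hmmP : mm ∈ Pmax F n j := by
        have hid : mm = (permGL F n z * permGL F n v) *
            ((permGL F n w)⁻¹ * g0⁻¹ * permGL F n w)⁻¹ *
            (permGL F n z * permGL F n v)⁻¹ := by
          rw [hmm, hwperm]; group
        rw [hid]
        exact mul_mem (mul_mem (mul_mem hzPj hvPj) (inv_mem hP1))
          (inv_mem (mul_mem hzPj hvPj))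
      have hmmB : permGL F n u * mm * (permGL F n u)⁻¹ ∈ Bsub F n := by
        rw [hconj, hg0]
        exact mul_mem (inv_mem hb1) hβ1
      refine ⟨mm, β1 * permGL F n w * β2, hmmP, hmmB, hmkx, ?_⟩
      have hkid : β1 * permGL F n w * β2
          = (b1 * permGL F n u) * (mm * (permGL F n z * (permGL F n v * β2))) := by
        rw [hwperm, hmm, hg0]; group
      rw [hkid, actGL_mul (b1 * permGL F n u) (mm * (permGL F n z * (permGL F n v * β2))),
        actGL_mul mm (permGL F n z * (permGL F n v * β2)),
        actGL_mul (permGL F n z) (permGL F n v * β2),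
        actGL_mul (permGL F n v) β2,
        mem_Pmax_iff_actGL.mp (Bsub_le_Pmax hβ2), mem_Pmax_iff_actGL.mp hvPi,
        actGL_permGL_colset]
    obtain ⟨m1, k1, hm1P, hm1B, hk1x, hact1⟩ := hdec x1 hx1
    obtain ⟨m2, k2, hm2P, hm2B, hk2x, hact2⟩ := hdec x2 hx2
    obtain ⟨m3, k3, hm3P, hm3B, hk3x, hact3⟩ := hdec x3 hx3
    have heqpt : ∀ (ka kb : GL (Fin n) F) (xa xb : GL (Fin n) F ⧸ Pmax F n i),
        QuotientGroup.mk ka = xa → QuotientGroup.mk kb = xb →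
        actGL ka (colset F n i) = actGL kb (colset F n i) → xa = xb := by
      intro ka kb xa xb hka hkb hact
      rw [← hka, ← hkb, mk_eq_mk_iff_actGL]
      exact hact
    have hzcase : z = 1 ∨ (q = 2 ∧ z = sT n i) := by
      rcases eq_or_lt_of_le hq2 with h2 | h3
      · rcases hqeq h2.symm with h | h
        · exact Or.inl h
        · exact Or.inr ⟨h2.symm, h⟩
      · exact Or.inl (hqgt h3)
    rcases hzcase with hz1 | ⟨hq2', hzsi⟩
    · -- z = 1 : all points coincide
      have hall : ∀ (mm k : GL (Fin n) F), mm ∈ Pmax F n j →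
          permGL F n u * mm * (permGL F n u)⁻¹ ∈ Bsub F n →
          actGL k (colset F n i) =
            actGL (b1 * permGL F n u) (actGL mm (zcolSet F z i)) →
          actGL k (colset F n i) = actGL (b1 * permGL F n u) (colset F n i) := by
        intro mm k hP hB hact
        have htri := hGamTri mm hP hB
        have hPi : mm ∈ Pmax F n i :=
          mem_Pmax_iff.mpr (fun a b hb ha => htri a b (by omega))
        rw [hact, hz1, zcolSet_one, mem_Pmax_iff_actGL.mp hPi]
      exact h12 (heqpt k1 k2 x1 x2 hk1x hk2x
        (by rw [hall m1 k1 hm1P hm1B hact1, hall m2 k2 hm2P hm2B hact2]))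
    · -- z = s_i and q = 2
      set p : Fin n := ⟨i - 1, by omega⟩ with hp
      set qq : Fin n := ⟨i, hilt⟩ with hqq
      have hpq : (p : ℕ) + 1 = (qq : ℕ) := by show i - 1 + 1 = i; omega
      have hqi : (qq : ℕ) = i := rfl
      have hzsw : z = Equiv.swap p qq := by
        rw [hzsi, sT, dif_pos (⟨by omega, hilt⟩ : 0 < i ∧ i < n)]
      have hzcol : zcolSet F z i = Wswap F p qq := by
        rw [hzsw]; exact zcolSet_swap hpq hqi
      have hcard2 : Fintype.card F = 2 := by rw [hF, hq2']
      have htag : ∀ (mm k : GL (Fin n) F), mm ∈ Pmax F n j →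
          permGL F n u * mm * (permGL F n u)⁻¹ ∈ Bsub F n →
          actGL k (colset F n i) =
            actGL (b1 * permGL F n u) (actGL mm (zcolSet F z i)) →
          actGL k (colset F n i) =
              actGL (b1 * permGL F n u) (Vswap F p qq 0) ∨
          actGL k (colset F n i) =
              actGL (b1 * permGL F n u) (Vswap F p qq 1) := by
        intro mm k hP hB hact
        have htri := hGamTri mm hP hB
        have htri' : ∀ a b : Fin n, (b : ℕ) < (a : ℕ) →
            ((mm⁻¹ : GL (Fin n) F) : Matrix (Fin n) (Fin n) F) a b = 0 := by
          have hB' : permGL F n u * mm⁻¹ * (permGL F n u)⁻¹ ∈ Bsub F n := by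
            have hgp : permGL F n u * mm⁻¹ * (permGL F n u)⁻¹
                = (permGL F n u * mm * (permGL F n u)⁻¹)⁻¹ := by group
            rw [hgp]; exact inv_mem hB
          exact hGamTri mm⁻¹ (inv_mem hP) hB'
        obtain ⟨t, hT⟩ := tri_actGL_Wswap mm htri htri' hpq
        rw [hzcol, hT] at hact
        rcases field_card_two hcard2 t with h0 | h0 <;> rw [h0] at hact
        · exact Or.inl hact
        · exact Or.inr hact
      have ht1 := htag m1 k1 hm1P hm1B hact1
      have ht2 := htag m2 k2 hm2P hm2B hact2
      have ht3 := htag m3 k3 hm3P hm3B hact3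
      rcases ht1 with h1 | h1 <;> rcases ht2 with h2 | h2 <;> rcases ht3 with h3 | h3 <;>
        first
          | exact h12 (heqpt k1 k2 x1 x2 hk1x hk2x (h1.trans h2.symm))
          | exact h13 (heqpt k1 k3 x1 x3 hk1x hk3x (h1.trans h3.symm))
          | exact h23 (heqpt k2 k3 x2 x3 hk2x hk3x (h2.trans h3.symm))
end
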